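/- arXiv:0810.5705 — 4 statements merged into one kernel-verified Lean document; each statement's English description precedes it below -/
import Mathlib

section
/- Let X be a p-normed space for 0 < p ≤ 1, i.e. ‖x+y‖^p ≤ ‖x‖^p + ‖y‖^p for all x, y ∈ X. Then for any finite sequence (x_k) in X and any choice of signs ε_k ∈ {-1, 0, 1}, one has the bound E‖∑ ε_k r_k x_k‖^p ≤ 2^{1-p} · 2 · E‖∑ r_k x_k‖^p, where (r_k) are independent uniform ±1 random variables and E denotes expectation. -/
set_option maxHeartbeats 1000000


/-- The real sign associated to a boolean: `true ↦ 1`, `false ↦ -1`. -/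
def radSign (b : Bool) : ℝ := if b then 1 else -1

lemma radSign_mul (a b : Bool) : radSign a * radSign b = radSign (a == b) := by
  cases a <;> cases b <;> norm_num [radSign]

lemma beq_invol (b : Bool) : ∀ s, (b == (b == s)) = s := by cases b <;> decide

/-- In a `p`-normed space (`0 < p ≤ 1`), for any finite sequence `(x k)` and any
coefficients `α k ∈ {-1, 0, 1}`, one has
`E ‖∑ α_k r_k x_k‖^p ≤ 2^(1-p) · 2 · E ‖∑ r_k x_k‖^p`, where the expectation is over
independent uniform signs `r_k = ±1`. -/
theorem pnormed_signs_zero_one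
    {X : Type*} [AddCommGroup X] [Module ℝ X]
    (p : ℝ) (hp0 : 0 < p) (hp1 : p ≤ 1)
    (N : X → ℝ)
    (hN0 : ∀ x, 0 ≤ N x)
    (hNsmul : ∀ (c : ℝ) (x : X), N (c • x) = |c| * N x)
    (hNp : ∀ x y : X, N (x + y) ^ p ≤ N x ^ p + N y ^ p)
    (n : ℕ) (x : Fin n → X) (α : Fin n → ℝ)
    (hα : ∀ k, α k = -1 ∨ α k = 0 ∨ α k = 1) :
    (∑ s : Fin n → Bool, N (∑ k, (α k * radSign (s k)) • x k) ^ p) / 2 ^ n ≤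
      (2 : ℝ) ^ (1 - p) * 2 *
        ((∑ s : Fin n → Bool, N (∑ k, radSign (s k) • x k) ^ p) / 2 ^ n) := by
  set S := ∑ s : Fin n → Bool, N (∑ k, radSign (s k) • x k) ^ p with hSdef
  have hS0 : 0 ≤ S := Finset.sum_nonneg fun s _ => Real.rpow_nonneg (hN0 _) p
  -- reindexing lemma
  have hre : ∀ b : Fin n → Bool,
      (∑ s : Fin n → Bool, N (∑ k, radSign (b k == s k) • x k) ^ p) = S := by
    intro b
    refine Fintype.sum_bijective (fun s k => b k == s k)
      (Function.Involutive.bijective (fun s => funext fun k => beq_invol (b k) (s k)))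
      _ _ (fun s => rfl)
  set b : Fin n → Bool := fun k => decide (α k ≠ -1) with hbdef
  set c : Fin n → Bool := fun k => decide (α k = 1) with hcdef
  have hcoef : ∀ k (u : Bool),
      α k * radSign u = (radSign (b k == u) + radSign (c k == u)) / 2 := by
    intro k u
    rw [← radSign_mul, ← radSign_mul]
    rcases hα k with h | h | h <;>
      simp only [hbdef, hcdef, h] <;> cases u <;> norm_num [radSign]
  have key : ∀ s : Fin n → Bool,
      N (∑ k, (α k * radSign (s k)) • x k) ^ p ≤
        (1/2 : ℝ) ^ p * (N (∑ k, radSign (b k == s k) • x k) ^ p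
          + N (∑ k, radSign (c k == s k) • x k) ^ p) := by
    intro s
    have hsum : ∑ k, (α k * radSign (s k)) • x k =
        (1/2 : ℝ) • ((∑ k, radSign (b k == s k) • x k)
          + ∑ k, radSign (c k == s k) • x k) := by
      rw [smul_add, Finset.smul_sum, Finset.smul_sum, ← Finset.sum_add_distrib]
      refine Finset.sum_congr rfl fun k _ => ?_
      rw [smul_smul, smul_smul, ← add_smul, hcoef k (s k)]
      ring_nf
    rw [hsum, hNsmul]
    rw [Real.mul_rpow (by positivity) (hN0 _)]
    have h12 : |(1/2 : ℝ)| = 1/2 := by norm_num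
    rw [h12]
    exact mul_le_mul_of_nonneg_left (hNp _ _) (Real.rpow_nonneg (by norm_num) p)
  have hsumle : (∑ s : Fin n → Bool, N (∑ k, (α k * radSign (s k)) • x k) ^ p) ≤
      (2 : ℝ) ^ (1 - p) * 2 * S := by
    calc (∑ s : Fin n → Bool, N (∑ k, (α k * radSign (s k)) • x k) ^ p)
        ≤ ∑ s : Fin n → Bool, (1/2 : ℝ) ^ p *
            (N (∑ k, radSign (b k == s k) • x k) ^ p
              + N (∑ k, radSign (c k == s k) • x k) ^ p) :=
          Finset.sum_le_sum fun s _ => key s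
      _ = (1/2 : ℝ) ^ p * (S + S) := by
          rw [← Finset.mul_sum, Finset.sum_add_distrib, hre b, hre c]
      _ ≤ (2 : ℝ) ^ (1 - p) * 2 * S := by
          have h2 : (2 : ℝ) ^ (1 - p) = 2 * (1/2 : ℝ) ^ p := by
            rw [Real.rpow_sub (by norm_num), Real.rpow_one, one_div,
              Real.inv_rpow (by norm_num)]
            field_simp
          rw [h2]
          have h12p : (0:ℝ) ≤ (1/2 : ℝ) ^ p := Real.rpow_nonneg (by norm_num) p
          nlinarith
  have hc : (0:ℝ) < 2 ^ n := by positivity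
  rw [← mul_div_assoc]
  exact div_le_div_of_nonneg_right hsumle hc.le
end

section
/- Let 0 < q < 1. For each n, there exist finite families x_{jj} ∈ M_n (namely x_{jj} = ∑_{k=1}^n e_{jk}, j = 1,...,n) such that ‖(∑_j x_{jj}* x_{jj})^{1/2}‖_{S_q} = n while (∑_j |(x_{jj})_{jj}|^q)^{1/q} = n^{1/q}. Consequently the inequality (∑_j |(x_{jj})_{jj}|^q)^{1/q} ≤ C ‖(∑_j x_{jj}* x_{jj})^{1/2}‖_{S_q} fails for q < 1 with any constant C independent of n. -/
open Matrix
open scoped ComplexOrder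

/-- `Matrix.PosSemidef.sqrt` was removed from Mathlib; restored with its old definition. -/
noncomputable def Matrix.PosSemidef.sqrt {n : Type*} [Fintype n] [DecidableEq n] {𝕜 : Type*} [RCLike 𝕜]
    {A : Matrix n n 𝕜} (hA : A.PosSemidef) : Matrix n n 𝕜 :=
  hA.1.eigenvectorUnitary.1 * diagonal ((↑) ∘ (Real.sqrt ∘ hA.1.eigenvalues)) *
    (star hA.1.eigenvectorUnitary : Matrix n n 𝕜)

/-- The Schatten `q`-(quasi)norm of a complex matrix (`0 < q < ∞`). -/
noncomputable def schattenNorm {n : ℕ} (q : ℝ) (y : Matrix (Fin n) (Fin n) ℂ) : ℝ :=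
  (∑ i, Real.sqrt ((Matrix.isHermitian_conjTranspose_mul_self y).eigenvalues i) ^ q) ^ (1 / q)

/-- Failure of the diagonal-coefficient estimate for `0 < q < 1`: with
`x_jj = ∑_k e_{jk}` in `M_n`, one has `‖(∑_j x_jj* x_jj)^{1/2}‖_{S_q} = n` while
`(∑_j |(x_jj)_{jj}|^q)^{1/q} = n^{1/q}`; hence for every constant `C` the inequality
`(∑_j |(x_jj)_{jj}|^q)^{1/q} ≤ C ‖(∑_j x_jj* x_jj)^{1/2}‖_{S_q}` fails for some `n`. -/
theorem diagonal_estimate_fails_for_q_lt_one (q : ℝ) (hq0 : 0 < q) (hq1 : q < 1) :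
    ∀ C : ℝ, ∃ (n : ℕ) (x : Fin n → Matrix (Fin n) (Fin n) ℂ)
      (h : (∑ j, (x j)ᴴ * x j).PosSemidef),
      (∀ j, x j = Matrix.of fun a _ => if a = j then 1 else 0) ∧
      schattenNorm q h.sqrt = (n : ℝ) ∧
      (∑ j, ‖x j j j‖ ^ q) ^ (1 / q) = (n : ℝ) ^ (1 / q) ∧
      C * schattenNorm q h.sqrt < (∑ j, ‖x j j j‖ ^ q) ^ (1 / q) := by
  intro C
  have hq : q ≠ 0 := hq0.ne'
  have h1q : (0:ℝ) < 1 - q := by linarith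
  set M : ℝ := max C 1 with hMdef
  have hM1 : (1:ℝ) ≤ M := le_max_right _ _
  have hMC : C ≤ M := le_max_left _ _
  have hMpow1 : (1:ℝ) ≤ M ^ (q / (1 - q)) := Real.one_le_rpow hM1 (by positivity)
  obtain ⟨n, hn⟩ := exists_nat_gt (M ^ (q / (1 - q)))
  have hn1 : (1:ℝ) < (n:ℝ) := lt_of_le_of_lt hMpow1 hn
  have hn0 : (0:ℝ) < (n:ℝ) := lt_trans one_pos hn1
  have hnpos : 0 < n := by exact_mod_cast hn0
  set x : Fin n → Matrix (Fin n) (Fin n) ℂ :=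
    fun j => Matrix.of fun a _ => if a = j then 1 else 0 with hxdef
  have hS : ∑ j, (x j)ᴴ * x j = Matrix.of fun _ _ => (n : ℂ) := by
    ext a b
    simp [hxdef, Matrix.sum_apply, Matrix.mul_apply, Matrix.conjTranspose_apply, apply_ite,
      Finset.sum_ite_eq, Finset.card_univ]
  have h : (∑ j, (x j)ᴴ * x j).PosSemidef :=
    Finset.sum_induction _ _ (fun a b ha hb => ha.add hb) PosSemidef.zero
      (fun j _ => posSemidef_conjTranspose_mul_self _)
  set J : Matrix (Fin n) (Fin n) ℂ := Matrix.of fun _ _ => 1 with hJdef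
  -- J is positive semidefinite
  have hJpsd : J.PosSemidef := by
    have hpsd := posSemidef_conjTranspose_mul_self (x ⟨0, hnpos⟩)
    have heq : (x ⟨0, hnpos⟩)ᴴ * x ⟨0, hnpos⟩ = J := by
      ext a b
      simp [hxdef, hJdef, Matrix.mul_apply, Matrix.conjTranspose_apply, apply_ite,
        Finset.sum_ite_eq]
    rwa [heq] at hpsd
  have hsq : J ^ 2 = ∑ j, (x j)ᴴ * x j := by
    rw [hS]
    ext a b
    simp [hJdef, pow_two, Matrix.mul_apply, Finset.card_univ]
  have hsqrt : h.sqrt = J := by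
    open scoped MatrixOrder in
    have e1 : h.sqrt = cfc Real.sqrt (∑ j, (x j)ᴴ * x j) := by
      rw [h.1.cfc_eq]; rfl
    open scoped MatrixOrder in
    have hJ0 : (0 : Matrix (Fin n) (Fin n) ℂ) ≤ J := hJpsd.nonneg
    open scoped MatrixOrder in
    have hJ2 : (0 : Matrix (Fin n) (Fin n) ℂ) ≤ J ^ 2 := hsq ▸ h.nonneg
    open scoped MatrixOrder in
    rw [e1, ← hsq, ← cfcₙ_eq_cfc, ← CFC.sqrt_eq_real_sqrt _ hJ2, CFC.sqrt_sq J hJ0]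
  -- facts about the eigenvalues of Jᴴ * J
  have hHmat : Jᴴ * J = Matrix.of fun _ _ => (n : ℂ) := by
    ext a b
    simp [hJdef, Matrix.mul_apply, Matrix.conjTranspose_apply, Finset.card_univ]
  have hnonneg : ∀ i, 0 ≤ (Matrix.isHermitian_conjTranspose_mul_self J).eigenvalues i := fun i =>
    (posSemidef_conjTranspose_mul_self J).eigenvalues_nonneg i
  have hHH : (Jᴴ * J) * (Jᴴ * J) = ((((n:ℝ)^2 : ℝ) : ℂ)) • (Jᴴ * J) := by
    rw [hHmat]
    ext a b
    push_cast
    simp [Matrix.mul_apply, Matrix.smul_apply, Finset.card_univ, Finset.sum_const,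
      nsmul_eq_mul]
    ring
  have hquad : ∀ i, (Matrix.isHermitian_conjTranspose_mul_self J).eigenvalues i ^ 2
      = (n:ℝ)^2 * (Matrix.isHermitian_conjTranspose_mul_self J).eigenvalues i := by
    intro i
    set hH := Matrix.isHermitian_conjTranspose_mul_self J
    set v : Fin n → ℂ := ⇑(hH.eigenvectorBasis i) with hv
    have hv0 : hH.eigenvectorBasis i ≠ 0 := hH.eigenvectorBasis.orthonormal.ne_zero i
    obtain ⟨k, hk⟩ : ∃ k, v k ≠ 0 := by
      by_contra hc
      push_neg at hc
      exact hv0 (by ext k; exact hc k)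
    have hmv := hH.mulVec_eigenvectorBasis i
    have h1 : (Jᴴ * J) *ᵥ ((Jᴴ * J) *ᵥ v) = hH.eigenvalues i • hH.eigenvalues i • v := by
      rw [hmv, Matrix.mulVec_smul, hmv]
    have h2 : (Jᴴ * J) *ᵥ ((Jᴴ * J) *ᵥ v)
        = ((((n:ℝ)^2 : ℝ) : ℂ)) • hH.eigenvalues i • v := by
      rw [Matrix.mulVec_mulVec, hHH, Matrix.smul_mulVec, hmv]
    have h3 := congrFun (h1.symm.trans h2) k
    simp only [Pi.smul_apply, Complex.real_smul, smul_eq_mul] at h3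
    have h4 : ((hH.eigenvalues i : ℂ) * (hH.eigenvalues i)) * v k
        = (((n:ℂ))^2 * hH.eigenvalues i) * v k := by
      push_cast at h3
      linear_combination h3
    have h5 := mul_right_cancel₀ hk h4
    have h6 : ((hH.eigenvalues i ^ 2 : ℝ) : ℂ) = (((n:ℝ)^2 * hH.eigenvalues i : ℝ) : ℂ) := by
      push_cast
      linear_combination h5
    exact_mod_cast h6
  have htr : ∑ i, (Matrix.isHermitian_conjTranspose_mul_self J).eigenvalues i = (n:ℝ)^2 := by
    have t1 : (Jᴴ * J).trace
        = ∑ i, (((Matrix.isHermitian_conjTranspose_mul_self J).eigenvalues i : ℝ) : ℂ) := by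
      conv_lhs => rw [(Matrix.isHermitian_conjTranspose_mul_self J).spectral_theorem]
      rw [Unitary.conjStarAlgAut_apply, Matrix.trace_mul_cycle,
        Matrix.mem_unitaryGroup_iff'.mp
          (Matrix.isHermitian_conjTranspose_mul_self J).eigenvectorUnitary.2,
        one_mul, Matrix.trace_diagonal]
      simp
    have t2 : (Jᴴ * J).trace = (((n:ℝ)^2 : ℝ) : ℂ) := by
      rw [hHmat]
      simp [Matrix.trace, Matrix.diag, Finset.card_univ]
      ring
    have := t1.symm.trans t2
    exact_mod_cast this
  have key : ∑ i, Real.sqrt ((Matrix.isHermitian_conjTranspose_mul_self J).eigenvalues i) ^ q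
      = (n:ℝ) ^ q := by
    have hterm : ∀ i, Real.sqrt ((Matrix.isHermitian_conjTranspose_mul_self J).eigenvalues i) ^ q
        = (Matrix.isHermitian_conjTranspose_mul_self J).eigenvalues i / (n:ℝ)^2 * (n:ℝ)^q := by
      intro i
      have hz : (Matrix.isHermitian_conjTranspose_mul_self J).eigenvalues i *
          ((Matrix.isHermitian_conjTranspose_mul_self J).eigenvalues i - (n:ℝ)^2) = 0 := by
        linear_combination hquad i
      rcases mul_eq_zero.mp hz with h0 | h0
      · rw [h0]
        simp [Real.zero_rpow hq]
      · have he : (Matrix.isHermitian_conjTranspose_mul_self J).eigenvalues i = (n:ℝ)^2 := by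
          linarith [sub_eq_zero.mp h0]
        rw [he, Real.sqrt_sq (le_of_lt hn0), div_self (by positivity), one_mul]
    rw [Finset.sum_congr rfl fun i _ => hterm i, ← Finset.sum_mul, ← Finset.sum_div, htr,
      div_self (by positivity), one_mul]
  have hsch : schattenNorm q h.sqrt = (n:ℝ) := by
    rw [hsqrt]
    unfold schattenNorm
    rw [key, ← Real.rpow_mul (le_of_lt hn0), mul_one_div_cancel hq, Real.rpow_one]
  have hdiag : ∑ j, ‖x j j j‖ ^ q = (n:ℝ) := by
    have hterm : ∀ j : Fin n, ‖x j j j‖ ^ q = 1 := by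
      intro j
      simp [hxdef, Real.one_rpow]
    rw [Finset.sum_congr rfl fun j _ => hterm j]
    simp [Finset.card_univ]
  refine ⟨n, x, h, fun j => rfl, hsch, by rw [hdiag], ?_⟩
  rw [hsch, hdiag]
  -- C * n < n ^ (1/q)
  have hM0 : (0:ℝ) ≤ M := le_trans zero_le_one hM1
  have hMe : (M ^ (q / (1 - q))) ^ ((1 - q) / q) = M := by
    rw [← Real.rpow_mul hM0]
    have hexp : q / (1 - q) * ((1 - q) / q) = 1 := by field_simp
    rw [hexp, Real.rpow_one]
  have hlt : M < (n:ℝ) ^ ((1 - q) / q) := by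
    calc M = (M ^ (q / (1 - q))) ^ ((1 - q) / q) := hMe.symm
      _ < (n:ℝ) ^ ((1 - q) / q) := Real.rpow_lt_rpow (by positivity) hn (by positivity)
  have hmul : C * (n:ℝ) < (n:ℝ) ^ ((1 - q) / q) * (n:ℝ) :=
    mul_lt_mul_of_pos_right (lt_of_le_of_lt hMC hlt) hn0
  have hfin : (n:ℝ) ^ ((1 - q) / q) * (n:ℝ) = (n:ℝ) ^ (1 / q) := by
    have hexp : (1 - q) / q + 1 = 1 / q := by field_simp; ring
    rw [← hexp, Real.rpow_add hn0, Real.rpow_one]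
  rw [← hfin]
  exact hmul
end

section
/- Let M be a finite von Neumann algebra with normalized trace τ (τ(1)=1), and let 0 < p ≤ 2. For t ≥ 0 in M ⊗ N with a trace-preserving conditional expectation E onto M, operator concavity of t ↦ t^{p/2} gives ‖t‖_{p/2} ≤ ‖E(t)‖_{p/2}. Consequently, if (ξ_k) is orthonormal in L^2 of a probability space and S = ∑ ξ_k ⊗ x_k with x_k ∈ L^p(τ), then ‖S‖_p ≤ ‖(∑ x_k* x_k)^{1/2}‖_p and ‖S‖_p ≤ ‖(∑ x_k x_k*)^{1/2}‖_p. In the matrix case: for x_k ∈ M_n and independent signs ε_k, (E‖∑ ε_k x_k‖_{S_p}^p)^{1/p} ≤ min{‖(∑ x_k*x_k)^{1/2}‖_{S_p}, ‖(∑ x_k x_k*)^{1/2}‖_{S_p}}. -/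
open Matrix
open scoped ComplexOrder

namespace KhintchineAux

open Polynomial

theorem charpoly_unitary_conj {n : ℕ} (U : Matrix.unitaryGroup (Fin n) ℂ) (M : Matrix (Fin n) (Fin n) ℂ) :
    ((U : Matrix (Fin n) (Fin n) ℂ) * M * star (U : Matrix (Fin n) (Fin n) ℂ)).charpoly = M.charpoly := by
  unfold Matrix.charpoly
  have h1 : charmatrix ((U : Matrix (Fin n) (Fin n) ℂ) * M * star (U : Matrix (Fin n) (Fin n) ℂ))
      = ((U : Matrix (Fin n) (Fin n) ℂ).map C) * charmatrix M * ((star (U : Matrix (Fin n) (Fin n) ℂ)).map C) := by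
    unfold charmatrix
    rw [Matrix.mul_sub, Matrix.sub_mul]
    congr 1
    · rw [(Matrix.scalar_commute (X : ℂ[X]) (fun r => mul_comm _ _) _).symm.eq, Matrix.mul_assoc,
        ← Matrix.map_mul, (Matrix.mem_unitaryGroup_iff.mp U.2)]
      simp
    · simp only [RingHom.mapMatrix_apply, ← Matrix.map_mul]
  rw [h1, Matrix.det_mul, Matrix.det_mul, mul_comm, ← mul_assoc, ← Matrix.det_mul, ← Matrix.map_mul,
    (Matrix.mem_unitaryGroup_iff'.mp U.2)]
  simp

theorem charpoly_hermitian {n : ℕ} {M : Matrix (Fin n) (Fin n) ℂ} (hM : M.IsHermitian) :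
    M.charpoly = ∏ i, (X - C (hM.eigenvalues i : ℂ)) := by
  conv_lhs => rw [hM.spectral_theorem, Unitary.conjStarAlgAut_apply]
  rw [show (star (hM.eigenvectorUnitary : Matrix (Fin n) (Fin n) ℂ)) =
    star ((hM.eigenvectorUnitary : Matrix (Fin n) (Fin n) ℂ)) from rfl]
  rw [charpoly_unitary_conj hM.eigenvectorUnitary]
  rw [Matrix.charpoly_of_upperTriangular _ (Matrix.blockTriangular_diagonal _)]
  simp

theorem charpoly_mul_comm' {n : ℕ} (A B : Matrix (Fin n) (Fin n) ℂ) :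
    (A * B).charpoly = (B * A).charpoly := by
  let K := FractionRing ℂ[X]
  have hinj : Function.Injective (algebraMap ℂ[X] K) := IsFractionRing.injective _ _
  apply hinj
  let φ : ℂ[X] →+* K := algebraMap ℂ[X] K
  let ψ : ℂ →+* K := φ.comp (C : ℂ →+* ℂ[X])
  have hx : (φ X) ≠ 0 := by
    intro h
    have : φ X = φ 0 := by simpa using h
    exact Polynomial.X_ne_zero (hinj this)
  have key : ∀ M : Matrix (Fin n) (Fin n) ℂ, φ M.charpoly = ((φ X) • 1 - M.map ψ).det := by
    intro M
    rw [Matrix.charpoly, RingHom.map_det]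
    congr 1
    ext i j
    rcases eq_or_ne i j with rfl | h
    · simp [Matrix.charmatrix_apply_eq, Matrix.map_apply, φ, ψ, Algebra.smul_def, Matrix.algebraMap_matrix_apply]
    · simp [Matrix.charmatrix_apply_ne _ _ _ h, Matrix.map_apply, Matrix.one_apply_ne h, φ, ψ]
  rw [key, key]
  have hmap : ∀ (P Q : Matrix (Fin n) (Fin n) ℂ), (P * Q).map ψ = P.map ψ * Q.map ψ :=
    fun P Q => Matrix.map_mul
  rw [hmap, hmap]
  set A' := A.map ψ; set B' := B.map ψ
  have expand : ∀ (P Q : Matrix (Fin n) (Fin n) K),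
      (φ X) • 1 - P * Q = (φ X) • (1 + ((-(φ X)⁻¹ • P) * Q)) := by
    intro P Q
    rw [smul_add, Matrix.smul_mul, smul_smul, mul_neg, mul_inv_cancel₀ hx, neg_smul, one_smul,
      ← sub_eq_add_neg]
  rw [expand A' B', expand B' A', Matrix.det_smul, Matrix.det_smul]
  congr 1
  rw [Matrix.det_one_add_mul_comm]
  congr 2
  rw [Matrix.mul_smul, Matrix.smul_mul]

theorem eig_multiset_mul_comm {n : ℕ} (A B : Matrix (Fin n) (Fin n) ℂ)
    (h1 : (A * B).IsHermitian) (h2 : (B * A).IsHermitian) :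
    (Finset.univ.val.map h1.eigenvalues) = (Finset.univ.val.map h2.eigenvalues) := by
  have hcp := charpoly_mul_comm' A B
  rw [charpoly_hermitian h1, charpoly_hermitian h2] at hcp
  have key : ∀ (μ : Fin n → ℝ), (∏ i, (X - C ((μ i : ℂ)))).roots
      = (Finset.univ.val.map μ).map (Complex.ofReal) := by
    intro μ
    rw [Finset.prod_eq_multiset_prod, Multiset.map_map]
    have := Polynomial.roots_multiset_prod_X_sub_C
      ((Finset.univ.val.map μ).map (Complex.ofReal))
    simpa [Multiset.map_map, Function.comp_def] using this
  have h := hcp ▸ (key h1.eigenvalues)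
  rw [key h2.eigenvalues] at h
  exact Multiset.map_injective Complex.ofReal_injective h.symm

theorem sum_f_eig_mul_comm {n : ℕ} (A B : Matrix (Fin n) (Fin n) ℂ)
    (h1 : (A * B).IsHermitian) (h2 : (B * A).IsHermitian) (f : ℝ → ℝ) :
    ∑ i, f (h1.eigenvalues i) = ∑ i, f (h2.eigenvalues i) := by
  have h := eig_multiset_mul_comm A B h1 h2
  calc ∑ i, f (h1.eigenvalues i)
      = ((Finset.univ.val.map h1.eigenvalues).map f).sum := by
        rw [Multiset.map_map]; rfl
    _ = ((Finset.univ.val.map h2.eigenvalues).map f).sum := by rw [h]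
    _ = ∑ i, f (h2.eigenvalues i) := by rw [Multiset.map_map]; rfl

theorem psd_diag_re_nonneg {n : ℕ} {M : Matrix (Fin n) (Fin n) ℂ} (hM : M.PosSemidef) (i : Fin n) :
    0 ≤ (M i i).re := by
  have := hM.re_dotProduct_nonneg (Pi.single i 1)
  simpa [dotProduct, Matrix.mulVec, Pi.single_apply, Finset.sum_ite_eq, Finset.sum_ite_eq']
    using this

theorem peierls {n : ℕ} {r : ℝ} (hr0 : 0 ≤ r) (hr1 : r ≤ 1)
    (U : Matrix.unitaryGroup (Fin n) ℂ) {A : Matrix (Fin n) (Fin n) ℂ} (hA : A.PosSemidef) :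
    ∑ i, (hA.1.eigenvalues i) ^ r ≤ ∑ i, ((star (U : Matrix (Fin n) (Fin n) ℂ) * A * U) i i).re ^ r := by
  classical
  set V := hA.1.eigenvectorUnitary with hV
  set Wm : Matrix (Fin n) (Fin n) ℂ := star (U : Matrix (Fin n) (Fin n) ℂ) * (V : Matrix (Fin n) (Fin n) ℂ) with hWm
  set lam := hA.1.eigenvalues with hlam
  have hW1 : star Wm * Wm = 1 := by
    rw [hWm, StarMul.star_mul, star_star, Matrix.mul_assoc, ← Matrix.mul_assoc (U : Matrix (Fin n) (Fin n) ℂ),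
      Matrix.mem_unitaryGroup_iff.mp U.2, Matrix.one_mul, Matrix.mem_unitaryGroup_iff'.mp V.2]
  have hW2 : Wm * star Wm = 1 := by
    rw [hWm, StarMul.star_mul, star_star, Matrix.mul_assoc, ← Matrix.mul_assoc (V : Matrix (Fin n) (Fin n) ℂ),
      Matrix.mem_unitaryGroup_iff.mp V.2, Matrix.one_mul, Matrix.mem_unitaryGroup_iff'.mp U.2]
  set P : Fin n → Fin n → ℝ := fun i j => Complex.normSq (Wm i j) with hP
  have hPnn : ∀ i j, 0 ≤ P i j := fun i j => Complex.normSq_nonneg _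
  have hrow : ∀ i, ∑ j, P i j = 1 := by
    intro i
    have h1 : ((Wm * star Wm) i i).re = 1 := by rw [hW2]; simp
    rw [Matrix.mul_apply] at h1
    rw [← h1]
    simp [Complex.mul_conj, P, Matrix.star_apply, Complex.re_sum]
  have hcol : ∀ j, ∑ i, P i j = 1 := by
    intro j
    have h1 : ((star Wm * Wm) j j).re = 1 := by rw [hW1]; simp
    rw [Matrix.mul_apply] at h1
    rw [← h1]
    simp [Complex.mul_conj, P, Matrix.star_apply, Complex.re_sum, mul_comm]
  have hdiag : ∀ i, ((star (U : Matrix (Fin n) (Fin n) ℂ) * A * U) i i).re = ∑ j, P i j * lam j := by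
    intro i
    have hspec : star (U : Matrix (Fin n) (Fin n) ℂ) * A * U
        = Wm * Matrix.diagonal (Complex.ofReal ∘ lam) * star Wm := by
      conv_lhs => rw [hA.1.spectral_theorem, Unitary.conjStarAlgAut_apply]
      rw [hWm, StarMul.star_mul, star_star]
      simp only [Matrix.mul_assoc]
      rfl
    rw [hspec]
    have : (Wm * Matrix.diagonal (Complex.ofReal ∘ lam) * star Wm) i i
        = ∑ j, (lam j : ℂ) * Complex.normSq (Wm i j) := by
      rw [Matrix.mul_apply]
      congr 1; ext j
      rw [Matrix.mul_diagonal]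
      simp only [Matrix.star_apply, Function.comp]
      rw [mul_comm (Wm i j) ((lam j : ℂ)), mul_assoc, Complex.star_def, Complex.mul_conj]
    rw [this]
    simp [Complex.re_sum, P, mul_comm]
  have hlamnn : ∀ j, 0 ≤ lam j := hA.eigenvalues_nonneg
  have hconc := Real.concaveOn_rpow hr0 hr1
  calc ∑ j, lam j ^ r = ∑ j, (∑ i, P i j) * lam j ^ r := by
        simp [hcol]
    _ = ∑ i, ∑ j, P i j * lam j ^ r := by
        rw [Finset.sum_comm]
        simp [Finset.sum_mul]
    _ ≤ ∑ i, (∑ j, P i j * lam j) ^ r := by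
        apply Finset.sum_le_sum
        intro i _
        have := hconc.le_map_sum (t := Finset.univ) (w := P i) (p := lam)
          (fun j _ => hPnn i j) (hrow i) (fun j _ => hlamnn j)
        simpa [smul_eq_mul] using this
    _ = ∑ i, ((star (U : Matrix (Fin n) (Fin n) ℂ) * A * U) i i).re ^ r := by
        simp [hdiag]

theorem trace_rpow_jensen {n : ℕ} {r : ℝ} (hr0 : 0 ≤ r) (hr1 : r ≤ 1)
    {ι : Type*} [Fintype ι] (w : ι → ℝ) (hw : ∀ s, 0 ≤ w s) (hw1 : ∑ s, w s = 1)
    (A : ι → Matrix (Fin n) (Fin n) ℂ) (hA : ∀ s, (A s).PosSemidef)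
    {Cm : Matrix (Fin n) (Fin n) ℂ} (hC : Cm.PosSemidef) (hCeq : ∑ s, w s • A s = Cm) :
    ∑ s, w s * ∑ i, (hA s).1.eigenvalues i ^ r ≤ ∑ i, hC.1.eigenvalues i ^ r := by
  classical
  set U := hC.1.eigenvectorUnitary with hU
  set g : ι → Fin n → ℝ := fun s i => ((star (U : Matrix (Fin n) (Fin n) ℂ) * A s * U) i i).re with hg
  have hgnn : ∀ s i, 0 ≤ g s i := by
    intro s i
    have hpsd : (star (U : Matrix (Fin n) (Fin n) ℂ) * A s * U).PosSemidef := by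
      have := (hA s).conjTranspose_mul_mul_same (U : Matrix (Fin n) (Fin n) ℂ)
      simpa [Matrix.star_eq_conjTranspose] using this
    exact psd_diag_re_nonneg hpsd i
  have hsum : ∀ i, ∑ s, w s * g s i = hC.1.eigenvalues i := by
    intro i
    have hdiag : star (U : Matrix (Fin n) (Fin n) ℂ) * Cm * (U : Matrix (Fin n) (Fin n) ℂ)
        = diagonal (RCLike.ofReal ∘ hC.1.eigenvalues) := by
      have := hC.1.conjStarAlgAut_star_eigenvectorUnitary
      simp only [Unitary.conjStarAlgAut_apply, Unitary.coe_star, star_star] at this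
      exact this
    have hlin : star (U : Matrix (Fin n) (Fin n) ℂ) * Cm * U
        = ∑ s, w s • (star (U : Matrix (Fin n) (Fin n) ℂ) * A s * U) := by
      rw [← hCeq, Finset.mul_sum, Finset.sum_mul]
      congr 1; ext s
      rw [Matrix.mul_smul, Matrix.smul_mul]
    have := congrArg (fun M => (M i i).re) hlin
    simp only [hdiag] at this
    simp only [Matrix.diagonal_apply_eq, Function.comp, Matrix.sum_apply, Complex.re_sum,
      Matrix.smul_apply, Complex.smul_re, smul_eq_mul] at this
    rw [← this]
    simp [Complex.ofReal_re]
  have hconc := Real.concaveOn_rpow hr0 hr1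
  calc ∑ s, w s * ∑ i, (hA s).1.eigenvalues i ^ r
      ≤ ∑ s, w s * ∑ i, g s i ^ r := by
        apply Finset.sum_le_sum
        intro s _
        exact mul_le_mul_of_nonneg_left (peierls hr0 hr1 U (hA s)) (hw s)
    _ = ∑ i, ∑ s, w s * g s i ^ r := by rw [Finset.sum_comm]; simp [Finset.mul_sum]
    _ ≤ ∑ i, (∑ s, w s * g s i) ^ r := by
        apply Finset.sum_le_sum
        intro i _
        have := hconc.le_map_sum (t := Finset.univ) (w := w) (p := fun s => g s i)
          (fun s _ => hw s) hw1 (fun s _ => hgnn s i)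
        simpa [smul_eq_mul] using this
    _ = ∑ i, hC.1.eigenvalues i ^ r := by simp [hsum]

lemma radSign_sq (b : Bool) : radSign b * radSign b = 1 := by cases b <;> simp [radSign]

lemma radSign_not (b : Bool) : radSign (!b) = -radSign b := by cases b <;> simp [radSign]

lemma rad_orth (m : ℕ) (k l : Fin m) :
    ∑ s : Fin m → Bool, radSign (s k) * radSign (s l) = if k = l then (2 ^ m : ℝ) else 0 := by
  rcases eq_or_ne k l with rfl | h
  · simp only [if_pos rfl, radSign_sq]
    rw [Finset.sum_const]
    simp [Finset.card_univ]
  · rw [if_neg h]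
    apply Finset.sum_ninvolution (g := fun s => Function.update s k (!(s k)))
    · intro s
      rw [Function.update_self, Function.update_of_ne (Ne.symm h), radSign_not]
      ring
    · intro s _
      intro hgs
      have := congrFun hgs k
      rw [Function.update_self] at this
      exact (Bool.not_ne_self _ ) this
    · intro s; exact Finset.mem_univ _
    · intro s
      simp [Function.update_idem]

lemma sign_avg {m n : ℕ} (M : Fin m → Fin m → Matrix (Fin n) (Fin n) ℂ) :
    ∑ s : Fin m → Bool, ∑ k, ∑ l, (radSign (s k) * radSign (s l)) • M k l
      = (2 ^ m : ℝ) • ∑ k, M k k := by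
  rw [Finset.sum_comm]
  have h2 : ∀ k, ∑ s : Fin m → Bool, ∑ l, (radSign (s k) * radSign (s l)) • M k l
      = (2 ^ m : ℝ) • M k k := by
    intro k
    rw [Finset.sum_comm]
    have h3 : ∀ l, ∑ s : Fin m → Bool, (radSign (s k) * radSign (s l)) • M k l
        = (if k = l then (2 ^ m : ℝ) else 0) • M k l := by
      intro l
      rw [← Finset.sum_smul, rad_orth]
    rw [Finset.sum_congr rfl (fun l _ => h3 l)]
    simp [Finset.sum_ite_eq]
  rw [Finset.sum_congr rfl (fun k _ => h2 k), ← Finset.smul_sum]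

lemma expand_col {m n : ℕ} (x : Fin m → Matrix (Fin n) (Fin n) ℂ) (s : Fin m → Bool) :
    (∑ k, radSign (s k) • x k)ᴴ * (∑ k, radSign (s k) • x k)
      = ∑ k, ∑ l, (radSign (s k) * radSign (s l)) • ((x k)ᴴ * x l) := by
  rw [Matrix.conjTranspose_sum, Finset.sum_mul]
  refine Finset.sum_congr rfl fun k _ => ?_
  rw [Finset.mul_sum]
  refine Finset.sum_congr rfl fun l _ => ?_
  rw [Matrix.conjTranspose_smul, star_trivial, Matrix.smul_mul, Matrix.mul_smul, smul_smul]

lemma expand_row {m n : ℕ} (x : Fin m → Matrix (Fin n) (Fin n) ℂ) (s : Fin m → Bool) :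
    (∑ k, radSign (s k) • x k) * (∑ k, radSign (s k) • x k)ᴴ
      = ∑ k, ∑ l, (radSign (s k) * radSign (s l)) • (x k * (x l)ᴴ) := by
  rw [Matrix.conjTranspose_sum, Finset.sum_mul]
  refine Finset.sum_congr rfl fun k _ => ?_
  rw [Finset.mul_sum]
  refine Finset.sum_congr rfl fun l _ => ?_
  rw [Matrix.conjTranspose_smul, star_trivial, Matrix.smul_mul, Matrix.mul_smul, smul_smul]

lemma eig_congr {n : ℕ} {A B : Matrix (Fin n) (Fin n) ℂ} (hA : A.IsHermitian) (hB : B.IsHermitian)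
    (h : A = B) : hA.eigenvalues = hB.eigenvalues := by subst h; rfl

lemma schattenNorm_nonneg {n : ℕ} (q : ℝ) (M : Matrix (Fin n) (Fin n) ℂ) :
    0 ≤ schattenNorm q M := by
  unfold schattenNorm
  exact Real.rpow_nonneg (Finset.sum_nonneg fun _i _ => Real.rpow_nonneg (Real.sqrt_nonneg _) _) _

lemma schatten_pow {n : ℕ} {p : ℝ} (hp0 : 0 < p) (M : Matrix (Fin n) (Fin n) ℂ) :
    schattenNorm p M ^ p
      = ∑ i, ((Matrix.isHermitian_conjTranspose_mul_self M).eigenvalues i) ^ (p / 2) := by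
  unfold schattenNorm
  have hsum0 : 0 ≤ ∑ i, Real.sqrt ((Matrix.isHermitian_conjTranspose_mul_self M).eigenvalues i) ^ p :=
    Finset.sum_nonneg fun i _ => Real.rpow_nonneg (Real.sqrt_nonneg _) _
  rw [← Real.rpow_mul hsum0, one_div, inv_mul_cancel₀ hp0.ne', Real.rpow_one]
  refine Finset.sum_congr rfl fun i _ => ?_
  rw [Real.sqrt_eq_rpow,
    ← Real.rpow_mul (Matrix.eigenvalues_conjTranspose_mul_self_nonneg M i), one_div_mul_eq_div]

lemma sqrtMat_sq {n : ℕ} {C : Matrix (Fin n) (Fin n) ℂ} (hC : C.PosSemidef) :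
    (hC.1.eigenvectorUnitary.1 * diagonal ((↑) ∘ (√·) ∘ hC.1.eigenvalues) *
        (star hC.1.eigenvectorUnitary : Matrix (Fin n) (Fin n) ℂ))ᴴ *
      (hC.1.eigenvectorUnitary.1 * diagonal ((↑) ∘ (√·) ∘ hC.1.eigenvalues) *
        (star hC.1.eigenvectorUnitary : Matrix (Fin n) (Fin n) ℂ)) = C := by
  set V := hC.1.eigenvectorUnitary
  have hU : star (V : Matrix (Fin n) (Fin n) ℂ) * V = 1 := Matrix.mem_unitaryGroup_iff'.mp V.2
  have hD : (diagonal (((↑) ∘ (√·) ∘ hC.1.eigenvalues) : Fin n → ℂ))ᴴ *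
      diagonal ((↑) ∘ (√·) ∘ hC.1.eigenvalues) = diagonal (RCLike.ofReal ∘ hC.1.eigenvalues) := by
    rw [diagonal_conjTranspose, diagonal_mul_diagonal]
    congr 1; ext i
    simp only [Pi.star_apply, Function.comp_apply, Complex.star_def, Complex.conj_ofReal]
    rw [← Complex.ofReal_mul, Real.mul_self_sqrt (hC.eigenvalues_nonneg i)]
    rfl
  conv_rhs => rw [hC.1.spectral_theorem, Unitary.conjStarAlgAut_apply]
  rw [Matrix.conjTranspose_mul, Matrix.conjTranspose_mul,
    ← Matrix.star_eq_conjTranspose (star (V : Matrix (Fin n) (Fin n) ℂ)), star_star,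
    ← Matrix.star_eq_conjTranspose (V : Matrix (Fin n) (Fin n) ℂ), ← hD]
  simp only [Matrix.mul_assoc]
  rw [← Matrix.mul_assoc (star (V : Matrix (Fin n) (Fin n) ℂ)) (V : Matrix (Fin n) (Fin n) ℂ), hU,
    Matrix.one_mul]

end KhintchineAux

open KhintchineAux
set_option maxHeartbeats 1000000

/-- The easy ("converse") direction of the non-commutative Khintchine inequality for
`0 < p ≤ 2`, matrix case: for `x_k ∈ M_n` and independent uniform signs `ε_k`,
`(E ‖∑ ε_k x_k‖_{S_p}^p)^{1/p} ≤ min { ‖(∑ x_k* x_k)^{1/2}‖_{S_p}, ‖(∑ x_k x_k*)^{1/2}‖_{S_p} }`.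
This follows from the operator concavity of `t ↦ t^{p/2}` applied to the conditional
expectation over the signs. -/
theorem khintchine_upper_bound_matrix
    (p : ℝ) (hp0 : 0 < p) (hp2 : p ≤ 2)
    (m n : ℕ) (x : Fin m → Matrix (Fin n) (Fin n) ℂ)
    (hc : (∑ k, (x k)ᴴ * x k).PosSemidef)
    (hr : (∑ k, x k * (x k)ᴴ).PosSemidef) :
    ((∑ s : Fin m → Bool, schattenNorm p (∑ k, radSign (s k) • x k) ^ p) / 2 ^ m) ^ (1 / p) ≤
      min (schattenNorm p (hc.1.eigenvectorUnitary.1 * diagonal ((↑) ∘ (√·) ∘ hc.1.eigenvalues) *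
        (star hc.1.eigenvectorUnitary : Matrix (Fin n) (Fin n) ℂ)))
        (schattenNorm p (hr.1.eigenvectorUnitary.1 * diagonal ((↑) ∘ (√·) ∘ hr.1.eigenvalues) *
        (star hr.1.eigenvectorUnitary : Matrix (Fin n) (Fin n) ℂ))) := by
  classical
  set y : (Fin m → Bool) → Matrix (Fin n) (Fin n) ℂ := fun s => ∑ k, radSign (s k) • x k with hy
  set r : ℝ := p / 2 with hrdef
  have hr0 : 0 ≤ r := by positivity
  have hr1 : r ≤ 1 := by rw [hrdef]; linarith
  have h2m : (0:ℝ) < 2 ^ m := by positivity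
  have hw : ∀ _ : Fin m → Bool, (0:ℝ) ≤ 1 / 2 ^ m := fun _ => by positivity
  have hw1 : ∑ _s : Fin m → Bool, (1 / 2 ^ m : ℝ) = 1 := by
    rw [Finset.sum_const]
    simp only [Finset.card_univ, Fintype.card_fun, Fintype.card_bool, Fintype.card_fin,
      nsmul_eq_mul]
    push_cast
    field_simp
  -- the per-sign Schatten p-th powers
  have hNp : ∀ s, schattenNorm p (y s) ^ p
      = ∑ i, ((Matrix.isHermitian_conjTranspose_mul_self (y s)).eigenvalues i) ^ r :=
    fun s => schatten_pow hp0 (y s)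
  have hNpnn : ∀ s, 0 ≤ schattenNorm p (y s) ^ p :=
    fun s => Real.rpow_nonneg (schattenNorm_nonneg _ _) _
  -- rewrite the LHS average
  have havg : (∑ s : Fin m → Bool, schattenNorm p (y s) ^ p) / 2 ^ m
      = ∑ s : Fin m → Bool, (1 / 2 ^ m : ℝ) * (schattenNorm p (y s) ^ p) := by
    rw [Finset.sum_div]
    exact Finset.sum_congr rfl fun s _ => by ring
  -- column bound
  have hCeqc : ∑ s : Fin m → Bool, (1 / 2 ^ m : ℝ) • ((y s)ᴴ * (y s)) = ∑ k, (x k)ᴴ * x k := by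
    rw [← Finset.smul_sum, Finset.sum_congr rfl (fun s _ => expand_col x s), sign_avg, smul_smul]
    rw [show (1 / 2 ^ m : ℝ) * 2 ^ m = 1 by field_simp, one_smul]
  have hjc := trace_rpow_jensen hr0 hr1 (fun _ : Fin m → Bool => (1 / 2 ^ m : ℝ)) hw hw1
    (fun s => (y s)ᴴ * (y s)) (fun s => Matrix.posSemidef_conjTranspose_mul_self (y s)) hc hCeqc
  have hcolbound : (∑ s : Fin m → Bool, schattenNorm p (y s) ^ p) / 2 ^ m
      ≤ ∑ i, hc.1.eigenvalues i ^ r := by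
    rw [havg]
    refine le_trans (le_of_eq ?_) hjc
    refine Finset.sum_congr rfl fun s _ => ?_
    rw [hNp s, eig_congr (Matrix.isHermitian_conjTranspose_mul_self (y s))
      (Matrix.posSemidef_conjTranspose_mul_self (y s)).1 rfl]
  -- row bound
  have hCeqr : ∑ s : Fin m → Bool, (1 / 2 ^ m : ℝ) • ((y s) * (y s)ᴴ) = ∑ k, x k * (x k)ᴴ := by
    rw [← Finset.smul_sum, Finset.sum_congr rfl (fun s _ => expand_row x s), sign_avg, smul_smul]
    rw [show (1 / 2 ^ m : ℝ) * 2 ^ m = 1 by field_simp, one_smul]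
  have hjr := trace_rpow_jensen hr0 hr1 (fun _ : Fin m → Bool => (1 / 2 ^ m : ℝ)) hw hw1
    (fun s => (y s) * (y s)ᴴ) (fun s => Matrix.posSemidef_self_mul_conjTranspose (y s)) hr hCeqr
  have hrowbound : (∑ s : Fin m → Bool, schattenNorm p (y s) ^ p) / 2 ^ m
      ≤ ∑ i, hr.1.eigenvalues i ^ r := by
    rw [havg]
    refine le_trans (le_of_eq ?_) hjr
    refine Finset.sum_congr rfl fun s _ => ?_
    rw [hNp s]
    have heq := sum_f_eig_mul_comm ((y s)ᴴ) (y s) (Matrix.isHermitian_conjTranspose_mul_self (y s))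
      (Matrix.isHermitian_mul_conjTranspose_self (y s)) (fun t => t ^ r)
    rw [eig_congr (Matrix.isHermitian_mul_conjTranspose_self (y s))
      (Matrix.posSemidef_self_mul_conjTranspose (y s)).1 rfl] at heq
    rw [heq]
  -- identify the right-hand sides
  have hbc : schattenNorm p (hc.1.eigenvectorUnitary.1 * diagonal ((↑) ∘ (√·) ∘ hc.1.eigenvalues) *
        (star hc.1.eigenvectorUnitary : Matrix (Fin n) (Fin n) ℂ)) ^ p = ∑ i, hc.1.eigenvalues i ^ r := by
    rw [hrdef, schatten_pow hp0, eig_congr (Matrix.isHermitian_conjTranspose_mul_self _) hc.1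
      (sqrtMat_sq hc)]
  have hbr : schattenNorm p (hr.1.eigenvectorUnitary.1 * diagonal ((↑) ∘ (√·) ∘ hr.1.eigenvalues) *
        (star hr.1.eigenvectorUnitary : Matrix (Fin n) (Fin n) ℂ)) ^ p = ∑ i, hr.1.eigenvalues i ^ r := by
    rw [hrdef, schatten_pow hp0, eig_congr (Matrix.isHermitian_conjTranspose_mul_self _) hr.1
      (sqrtMat_sq hr)]
  -- conclude
  have hDnn : 0 ≤ (∑ s : Fin m → Bool, schattenNorm p (y s) ^ p) / 2 ^ m :=
    div_nonneg (Finset.sum_nonneg fun s _ => hNpnn s) h2m.le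
  have final : ∀ b : ℝ, 0 ≤ b →
      (∑ s : Fin m → Bool, schattenNorm p (y s) ^ p) / 2 ^ m ≤ b ^ p →
      ((∑ s : Fin m → Bool, schattenNorm p (y s) ^ p) / 2 ^ m) ^ (1 / p) ≤ b := by
    intro b hb hle
    calc ((∑ s : Fin m → Bool, schattenNorm p (y s) ^ p) / 2 ^ m) ^ (1 / p)
        ≤ (b ^ p) ^ (1 / p) := Real.rpow_le_rpow hDnn hle (by positivity)
      _ = b := by
          rw [← Real.rpow_mul hb, mul_one_div, div_self hp0.ne', Real.rpow_one]
  refine le_min ?_ ?_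
  · exact final _ (schattenNorm_nonneg _ _) (hbc ▸ hcolbound)
  · exact final _ (schattenNorm_nonneg _ _) (hbr ▸ hrowbound)
end

section
/- (Column-only extrapolation data, scalar diagonal case.) Let 0 < p < q ≤ 2, 1/r = 1/p - 1/2, and let f = diag(f_i) be a positive diagonal density with finite spectrum. If T = [T_{ij}] and S_{ij} = f_i^{1/r} T_{ij}, then for 1/q = (1-θ)/p + θ/2 one has, entrywise in Schatten norms: ‖f^{(1-θ)/r} T‖_{S_q} ≤ ‖f^{1/r} T‖_{S_p}^{1-θ} ‖T‖_{S_2}^θ. -/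
open Matrix
open scoped ComplexOrder

/-- The diagonal matrix with entries `f_i ^ s`. -/
noncomputable def diagPow {n : ℕ} (f : Fin n → ℝ) (s : ℝ) : Matrix (Fin n) (Fin n) ℂ :=
  Matrix.diagonal fun i => ((f i ^ s : ℝ) : ℂ)


open Finset

/-- Two-term Hölder for finite sums. -/
lemma sum_rpow_mul_rpow_le {ι : Type*} (s : Finset ι) (x y : ι → ℝ)
    (hx : ∀ i, 0 ≤ x i) (hy : ∀ i, 0 ≤ y i) {α β : ℝ} (hα : 0 < α) (hβ : 0 < β)
    (hαβ : α + β = 1) :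
    ∑ i ∈ s, x i ^ α * y i ^ β ≤ (∑ i ∈ s, x i) ^ α * (∑ i ∈ s, y i) ^ β := by
  set X := ∑ i ∈ s, x i with hX
  set Y := ∑ i ∈ s, y i with hY
  have hX0 : 0 ≤ X := Finset.sum_nonneg fun i _ => hx i
  have hY0 : 0 ≤ Y := Finset.sum_nonneg fun i _ => hy i
  rcases eq_or_lt_of_le hX0 with hX0' | hXpos
  · have hxz : ∀ i ∈ s, x i = 0 :=
      (Finset.sum_eq_zero_iff_of_nonneg (fun i _ => hx i)).1 hX0'.symm
    have : ∀ i ∈ s, x i ^ α * y i ^ β = 0 := by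
      intro i hi; rw [hxz i hi, Real.zero_rpow hα.ne', zero_mul]
    rw [Finset.sum_congr rfl this, Finset.sum_const, smul_zero]
    positivity
  rcases eq_or_lt_of_le hY0 with hY0' | hYpos
  · have hyz : ∀ i ∈ s, y i = 0 :=
      (Finset.sum_eq_zero_iff_of_nonneg (fun i _ => hy i)).1 hY0'.symm
    have : ∀ i ∈ s, x i ^ α * y i ^ β = 0 := by
      intro i hi; rw [hyz i hi, Real.zero_rpow hβ.ne', mul_zero]
    rw [Finset.sum_congr rfl this, Finset.sum_const, smul_zero]
    positivity
  have key : ∀ i, x i ^ α * y i ^ β ≤ X ^ α * Y ^ β * (α * (x i / X) + β * (y i / Y)) := by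
    intro i
    have h1 : (x i / X) ^ α * (y i / Y) ^ β ≤ α * (x i / X) + β * (y i / Y) :=
      Real.geom_mean_le_arith_mean2_weighted hα.le hβ.le
        (div_nonneg (hx i) hX0) (div_nonneg (hy i) hY0) hαβ
    have h2 : x i ^ α * y i ^ β = X ^ α * Y ^ β * ((x i / X) ^ α * (y i / Y) ^ β) := by
      rw [Real.div_rpow (hx i) hX0, Real.div_rpow (hy i) hY0]
      field_simp
    rw [h2]
    exact mul_le_mul_of_nonneg_left h1 (by positivity)
  calc ∑ i ∈ s, x i ^ α * y i ^ β
      ≤ ∑ i ∈ s, X ^ α * Y ^ β * (α * (x i / X) + β * (y i / Y)) :=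
        Finset.sum_le_sum fun i _ => key i
    _ = X ^ α * Y ^ β * (α * (X / X) + β * (Y / Y)) := by
        rw [← Finset.mul_sum]
        congr 1
        rw [Finset.sum_add_distrib, ← Finset.mul_sum, ← Finset.mul_sum, ← Finset.sum_div,
          ← Finset.sum_div]
    _ = X ^ α * Y ^ β := by
        rw [div_self hXpos.ne', div_self hYpos.ne', mul_one, mul_one, hαβ, mul_one]

/-- Abel-type lemma: if `c` is antitone and nonnegative on `range m` and all partial sums
of `d` are nonpositive, then `∑ c i * d i ≤ 0`. -/
lemma abel_sum_nonpos (d : ℕ → ℝ) : ∀ (m : ℕ) (c : ℕ → ℝ),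
    (∀ i < m, 0 ≤ c i) → (∀ i j, i ≤ j → j < m → c j ≤ c i) →
    (∀ k ≤ m, ∑ i ∈ range k, d i ≤ 0) →
    ∑ i ∈ range m, c i * d i ≤ 0 := by
  intro m
  induction m with
  | zero => simp
  | succ m ih =>
    intro c hc0 hca hD
    have key : ∑ i ∈ range (m+1), c i * d i
        = ∑ i ∈ range (m+1), (c i - c m) * d i + c m * ∑ i ∈ range (m+1), d i := by
      rw [Finset.mul_sum, ← Finset.sum_add_distrib]
      congr 1; ext i; ring
    rw [key]
    have h2 : c m * ∑ i ∈ range (m+1), d i ≤ 0 :=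
      mul_nonpos_of_nonneg_of_nonpos (hc0 m (Nat.lt_succ_self m)) (hD (m+1) le_rfl)
    have h1 : ∑ i ∈ range (m+1), (c i - c m) * d i = ∑ i ∈ range m, (c i - c m) * d i := by
      rw [Finset.sum_range_succ, sub_self, zero_mul, add_zero]
    rw [h1]
    have := ih (fun i => c i - c m)
      (fun i hi => sub_nonneg.2 (hca i m hi.le (Nat.lt_succ_self m)))
      (fun i j hij hj => sub_le_sub_right (hca i j hij (hj.trans (Nat.lt_succ_self m))) _)
      (fun k hk => hD k (hk.trans (Nat.le_succ m)))
    linarith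

/-- HLP-type: if `x` is antitone on `range m` and partial sums of `x` are dominated by those
of `y`, then `∑ exp (x i) ≤ ∑ exp (y i)`. -/
lemma sum_exp_le_sum_exp (m : ℕ) (x y : ℕ → ℝ)
    (hxa : ∀ i j, i ≤ j → j < m → x j ≤ x i)
    (hS : ∀ k ≤ m, ∑ i ∈ range k, x i ≤ ∑ i ∈ range k, y i) :
    ∑ i ∈ range m, Real.exp (x i) ≤ ∑ i ∈ range m, Real.exp (y i) := by
  have key : ∀ i, Real.exp (x i) - Real.exp (y i) ≤ Real.exp (x i) * (x i - y i) := by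
    intro i
    have h := Real.add_one_le_exp (y i - x i)
    have h2 : Real.exp (y i) = Real.exp (x i) * Real.exp (y i - x i) := by
      rw [← Real.exp_add]; ring_nf
    nlinarith [Real.exp_pos (x i), Real.exp_pos (y i)]
  have habel : ∑ i ∈ range m, Real.exp (x i) * (x i - y i) ≤ 0 := by
    apply abel_sum_nonpos (fun i => x i - y i) m (fun i => Real.exp (x i))
    · exact fun i _ => (Real.exp_pos _).le
    · exact fun i j hij hj => Real.exp_le_exp.2 (hxa i j hij hj)
    · intro k hk
      have := hS k hk
      have h3 : ∑ i ∈ range k, (x i - y i) = (∑ i ∈ range k, x i) - ∑ i ∈ range k, y i := by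
        rw [Finset.sum_sub_distrib]
      rw [h3]; linarith
  have h4 : ∑ i ∈ range m, (Real.exp (x i) - Real.exp (y i))
      ≤ ∑ i ∈ range m, Real.exp (x i) * (x i - y i) :=
    Finset.sum_le_sum fun i _ => key i
  rw [Finset.sum_sub_distrib] at h4
  linarith

/-- Weak log-majorization implies sum domination, strictly positive case. -/
lemma sum_le_sum_of_prodles_pos (m : ℕ) (a b : ℕ → ℝ)
    (ha : ∀ i < m, 0 < a i) (hb : ∀ i < m, 0 < b i)
    (haa : ∀ i j, i ≤ j → j < m → a j ≤ a i)
    (hP : ∀ k ≤ m, ∏ i ∈ range k, a i ≤ ∏ i ∈ range k, b i) :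
    ∑ i ∈ range m, a i ≤ ∑ i ∈ range m, b i := by
  have hx : ∀ i ∈ range m, Real.exp (Real.log (a i)) = a i :=
    fun i hi => Real.exp_log (ha i (Finset.mem_range.1 hi))
  have hy : ∀ i ∈ range m, Real.exp (Real.log (b i)) = b i :=
    fun i hi => Real.exp_log (hb i (Finset.mem_range.1 hi))
  rw [← Finset.sum_congr rfl hx, ← Finset.sum_congr rfl hy]
  apply sum_exp_le_sum_exp m _ _
  · exact fun i j hij hj => Real.log_le_log (ha j hj) (haa i j hij hj)
  · intro k hk
    have hpa : ∑ i ∈ range k, Real.log (a i) = Real.log (∏ i ∈ range k, a i) := by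
      rw [Real.log_prod]
      exact fun i hi => (ha i ((Finset.mem_range.1 hi).trans_le hk)).ne'
    have hpb : ∑ i ∈ range k, Real.log (b i) = Real.log (∏ i ∈ range k, b i) := by
      rw [Real.log_prod]
      exact fun i hi => (hb i ((Finset.mem_range.1 hi).trans_le hk)).ne'
    rw [hpa, hpb]
    apply Real.log_le_log _ (hP k hk)
    exact Finset.prod_pos fun i hi => ha i ((Finset.mem_range.1 hi).trans_le hk)

/-- Weak log-majorization implies domination of sums of `t`-th powers (with zeros allowed). -/
lemma sum_rpow_le_sum_rpow_of_prodles (m : ℕ) (a b : ℕ → ℝ)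
    (ha0 : ∀ i < m, 0 ≤ a i) (hb0 : ∀ i < m, 0 ≤ b i)
    (haa : ∀ i j, i ≤ j → j < m → a j ≤ a i)
    (hP : ∀ k ≤ m, ∏ i ∈ range k, a i ≤ ∏ i ∈ range k, b i)
    {t : ℝ} (ht : 0 < t) :
    ∑ i ∈ range m, a i ^ t ≤ ∑ i ∈ range m, b i ^ t := by
  by_cases hall : ∀ i < m, 0 < a i
  -- all positive case
  · have hb : ∀ i < m, 0 < b i := by
      intro j hj
      by_contra hbj
      push_neg at hbj
      have hbj0 : b j = 0 := le_antisymm hbj (hb0 j hj)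
      have h1 : ∏ i ∈ range (j+1), b i = 0 := by
        apply Finset.prod_eq_zero (Finset.mem_range.2 (Nat.lt_succ_self j)) hbj0
      have h2 : 0 < ∏ i ∈ range (j+1), a i :=
        Finset.prod_pos fun i hi => hall i ((Nat.lt_succ_iff.1 (Finset.mem_range.1 hi)).trans_lt hj)
      have := hP (j+1) hj
      rw [h1] at this
      linarith
    apply sum_le_sum_of_prodles_pos m _ _
      (fun i hi => Real.rpow_pos_of_pos (hall i hi) t)
      (fun i hi => Real.rpow_pos_of_pos (hb i hi) t)
      (fun i j hij hj => Real.rpow_le_rpow (ha0 j hj) (haa i j hij hj) ht.le)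
    intro k hk
    have h1 : ∏ i ∈ range k, a i ^ t = (∏ i ∈ range k, a i) ^ t :=
      Real.finset_prod_rpow _ _ (fun i hi => ha0 i ((Finset.mem_range.1 hi).trans_le hk)) t
    have h2 : ∏ i ∈ range k, b i ^ t = (∏ i ∈ range k, b i) ^ t :=
      Real.finset_prod_rpow _ _ (fun i hi => hb0 i ((Finset.mem_range.1 hi).trans_le hk)) t
    rw [h1, h2]
    exact Real.rpow_le_rpow (Finset.prod_nonneg fun i hi =>
      ha0 i ((Finset.mem_range.1 hi).trans_le hk)) (hP k hk) ht.le
  -- some a is zero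
  · push_neg at hall
    obtain ⟨j0, hj0m, hj00⟩ := hall
    -- find minimal index with a = 0
    have hex : ∃ j, j < m ∧ a j ≤ 0 := ⟨j0, hj0m, hj00⟩
    classical
    let j1 := Nat.find hex
    obtain ⟨hj1m, hj1z⟩ := Nat.find_spec hex
    have hj1min : ∀ i < j1, ¬(i < m ∧ a i ≤ 0) := fun i hi => Nat.find_min hex hi
    have hzero : ∀ i, j1 ≤ i → i < m → a i = 0 := by
      intro i hji him
      have hja : a j1 = 0 := le_antisymm hj1z (ha0 j1 hj1m)
      have := haa j1 i hji him
      have := ha0 i him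
      linarith
    have hpos : ∀ i < j1, 0 < a i := by
      intro i hi
      have := hj1min i hi
      push_neg at this
      exact this (hi.trans hj1m)
    have hsplit : ∑ i ∈ range m, a i ^ t = ∑ i ∈ range j1, a i ^ t := by
      rw [← Finset.sum_range_add_sum_Ico _ hj1m.le]
      have : ∑ i ∈ Finset.Ico j1 m, a i ^ t = 0 := by
        apply Finset.sum_eq_zero
        intro i hi
        obtain ⟨h1, h2⟩ := Finset.mem_Ico.1 hi
        rw [hzero i h1 h2, Real.zero_rpow ht.ne']
      rw [this, add_zero]
    rw [hsplit]
    have step : ∑ i ∈ range j1, a i ^ t ≤ ∑ i ∈ range j1, b i ^ t := by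
      by_cases hj1 : j1 = 0
      · simp [hj1]
      · -- use the positive case on range j1
        have hb : ∀ i < j1, 0 < b i := by
          intro j hj
          by_contra hbj
          push_neg at hbj
          have hbj0 : b j = 0 := le_antisymm hbj (hb0 j (hj.trans hj1m))
          have h1 : ∏ i ∈ range (j+1), b i = 0 :=
            Finset.prod_eq_zero (Finset.mem_range.2 (Nat.lt_succ_self j)) hbj0
          have h2 : 0 < ∏ i ∈ range (j+1), a i :=
            Finset.prod_pos fun i hi => hpos i ((Nat.lt_succ_iff.1 (Finset.mem_range.1 hi)).trans_lt hj)
          have := hP (j+1) ((Nat.succ_le_of_lt hj).trans hj1m.le)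
          rw [h1] at this
          linarith
        apply sum_le_sum_of_prodles_pos j1 _ _
          (fun i hi => Real.rpow_pos_of_pos (hpos i hi) t)
          (fun i hi => Real.rpow_pos_of_pos (hb i hi) t)
          (fun i j hij hj => Real.rpow_le_rpow (ha0 j (hj.trans hj1m))
            (haa i j hij (hj.trans hj1m)) ht.le)
        intro k hk
        have hkm : k ≤ m := hk.trans hj1m.le
        have h1 : ∏ i ∈ range k, a i ^ t = (∏ i ∈ range k, a i) ^ t :=
          Real.finset_prod_rpow _ _ (fun i hi => ha0 i ((Finset.mem_range.1 hi).trans_le hkm)) t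
        have h2 : ∏ i ∈ range k, b i ^ t = (∏ i ∈ range k, b i) ^ t :=
          Real.finset_prod_rpow _ _ (fun i hi => hb0 i ((Finset.mem_range.1 hi).trans_le hkm)) t
        rw [h1, h2]
        exact Real.rpow_le_rpow (Finset.prod_nonneg fun i hi =>
          ha0 i ((Finset.mem_range.1 hi).trans_le hkm)) (hP k hkm) ht.le
    refine step.trans (Finset.sum_le_sum_of_subset_of_nonneg ?_ ?_)
    · exact Finset.range_subset_range.2 hj1m.le
    · intro i hi _
      exact Real.rpow_nonneg (hb0 i (Finset.mem_range.1 hi)) t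


open Matrix Finset

variable {R : Type*} [CommRing R]

section CauchyBinet

variable {k n : ℕ}

/-- The set of `k`-element subsets of `Fin n`. -/
abbrev KSub (n k : ℕ) := {s : Finset (Fin n) // s.card = k}

/-- The increasing enumeration of a `k`-subset. -/
noncomputable def kEmb (S : KSub n k) : Fin k → Fin n := S.1.orderEmbOfFin S.2

lemma kEmb_injective (S : KSub n k) : Function.Injective (kEmb S) :=
  (S.1.orderEmbOfFin S.2).injective

lemma kEmb_mem (S : KSub n k) (i : Fin k) : kEmb S i ∈ S.1 :=
  Finset.orderEmbOfFin_mem _ _ _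

lemma image_eq_of_maps (S : KSub n k) (p : Fin k → Fin n) (hp : Function.Injective p)
    (hmem : ∀ i, p i ∈ S.1) : Finset.image p Finset.univ = S.1 := by
  apply Finset.eq_of_subset_of_card_le
  · intro x hx
    obtain ⟨i, _, rfl⟩ := Finset.mem_image.1 hx
    exact hmem i
  · rw [Finset.card_image_of_injective _ hp, Finset.card_univ, Fintype.card_fin, S.2]

private lemma cb_aux (A : Matrix (Fin k) (Fin n) R) (B : Matrix (Fin n) (Fin k) R)
    {p : Fin k → Fin n} (H : ¬Function.Injective p) :
    (∑ σ : Equiv.Perm (Fin k),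
      ((Equiv.Perm.sign σ : ℤ) : R) * ∏ x, A (σ x) (p x) * B (p x) x) = 0 := by
  obtain ⟨i, j, hpij, hij⟩ : ∃ i j, p i = p j ∧ i ≠ j := by
    rw [Function.Injective] at H
    push_neg at H
    obtain ⟨i, j, h1, h2⟩ := H
    exact ⟨i, j, h1, h2⟩
  exact Finset.sum_involution (fun σ _ => σ * Equiv.swap i j)
    (fun σ _ => by
      have : (∏ x, A (σ x) (p x)) = ∏ x, A ((σ * Equiv.swap i j) x) (p x) :=
        Fintype.prod_equiv (Equiv.swap i j) _ _ (by simp [Equiv.apply_swap_eq_self hpij])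
      simp [this, Equiv.Perm.sign_swap hij, ← Equiv.Perm.sign_swap', prod_mul_distrib])
    (fun σ _ _ => (not_congr Equiv.mul_swap_eq_iff).mpr hij)
    (fun _ _ => Finset.mem_univ _)
    (fun σ _ => Equiv.mul_swap_involutive i j σ)

/-- Expansion of `det (M * N)` as a double sum over permutations. -/
private lemma det_mul_expand (M N : Matrix (Fin k) (Fin k) R) :
    det (M * N) = ∑ τ : Equiv.Perm (Fin k), ∑ σ : Equiv.Perm (Fin k),
      ((Equiv.Perm.sign σ : ℤ) : R) * ∏ i, M (σ i) (τ i) * N (τ i) i := by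
  classical
  calc det (M * N)
      = ∑ p : Fin k → Fin k, ∑ σ : Equiv.Perm (Fin k),
          ((Equiv.Perm.sign σ : ℤ) : R) * ∏ i, M (σ i) (p i) * N (p i) i := by
        simp only [det_apply', mul_apply, Finset.prod_univ_sum, Finset.mul_sum,
          Fintype.piFinset_univ]
        rw [Finset.sum_comm]
    _ = ∑ p ∈ Finset.univ.filter (fun p : Fin k → Fin k => Function.Injective p),
          ∑ σ : Equiv.Perm (Fin k),
          ((Equiv.Perm.sign σ : ℤ) : R) * ∏ i, M (σ i) (p i) * N (p i) i := by
        refine (Finset.sum_subset (Finset.filter_subset _ _) fun f _ hni => ?_).symm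
        apply cb_aux M N
        simpa using hni
    _ = ∑ τ : Equiv.Perm (Fin k), ∑ σ : Equiv.Perm (Fin k),
          ((Equiv.Perm.sign σ : ℤ) : R) * ∏ i, M (σ i) (τ i) * N (τ i) i := by
        apply Finset.sum_bij
          (fun p hp => Equiv.ofBijective p
            (Finite.injective_iff_bijective.1 (by simpa using hp)))
        · exact fun _ _ => Finset.mem_univ _
        · intro p hp p' hp' h
          funext x
          simpa using DFunLike.congr_fun h x
        · intro τ _
          refine ⟨(τ : Fin k → Fin k), by simp [τ.injective], ?_⟩
          ext x
          simp
        · intro p hp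
          rfl

/-- **Cauchy–Binet formula.** -/
lemma cauchy_binet (A : Matrix (Fin k) (Fin n) R) (B : Matrix (Fin n) (Fin k) R) :
    det (A * B) = ∑ S : KSub n k,
      det (A.submatrix id (kEmb S)) * det (B.submatrix (kEmb S) id) := by
  classical
  have key : ∑ x : KSub n k × Equiv.Perm (Fin k),
          (∑ σ : Equiv.Perm (Fin k),
          ((Equiv.Perm.sign σ : ℤ) : R) *
            ∏ i, A (σ i) (kEmb x.1 (x.2 i)) * B (kEmb x.1 (x.2 i)) i)
      = ∑ p ∈ Finset.univ.filter (fun p : Fin k → Fin n => Function.Injective p),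
          ∑ σ : Equiv.Perm (Fin k),
          ((Equiv.Perm.sign σ : ℤ) : R) * ∏ i, A (σ i) (p i) * B (p i) i := by
    apply Finset.sum_bij (fun x _ => kEmb x.1 ∘ x.2)
    · intro x _
      simp only [Finset.mem_filter, Finset.mem_univ, true_and]
      exact (kEmb_injective x.1).comp x.2.injective
    · intro x _ y _ h
      have hS : x.1 = y.1 := by
        apply Subtype.ext
        rw [← image_eq_of_maps x.1 (kEmb x.1 ∘ x.2)
            ((kEmb_injective x.1).comp x.2.injective) (fun i => kEmb_mem x.1 _),
          ← image_eq_of_maps y.1 (kEmb y.1 ∘ y.2)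
            ((kEmb_injective y.1).comp y.2.injective) (fun i => kEmb_mem y.1 _), h]
      have hτ : x.2 = y.2 := by
        refine Equiv.ext fun i => kEmb_injective x.1 ?_
        have := congrFun h i
        simp only [Function.comp_apply] at this
        rw [this, hS]
      exact Prod.ext hS hτ
    · intro p hp
      have hpinj : Function.Injective p := by simpa using hp
      have hcard : (Finset.univ.image p).card = k := by
        rw [Finset.card_image_of_injective _ hpinj, Finset.card_univ, Fintype.card_fin]
      set S : KSub n k := ⟨Finset.univ.image p, hcard⟩ with hSdef
      have hmem : ∀ i, p i ∈ S.1 := fun i => Finset.mem_image_of_mem p (Finset.mem_univ i)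
      have htinj : Function.Injective
          (fun i => (S.1.orderIsoOfFin S.2).symm ⟨p i, hmem i⟩) := by
        intro i j hij
        apply hpinj
        have := congrArg (fun z => ((S.1.orderIsoOfFin S.2) z : Fin n)) hij
        simpa using this
      refine ⟨(S, Equiv.ofBijective _ (Finite.injective_iff_bijective.1 htinj)),
        Finset.mem_univ _, ?_⟩
      funext i
      show kEmb S _ = p i
      unfold kEmb
      rw [Equiv.ofBijective_apply, ← Finset.coe_orderIsoOfFin_apply,
        OrderIso.apply_symm_apply]
    · intro x _
      rfl
  calc det (A * B)
      = ∑ p : Fin k → Fin n, ∑ σ : Equiv.Perm (Fin k),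
          ((Equiv.Perm.sign σ : ℤ) : R) * ∏ i, A (σ i) (p i) * B (p i) i := by
        simp only [det_apply', mul_apply, Finset.prod_univ_sum, Finset.mul_sum,
          Fintype.piFinset_univ]
        rw [Finset.sum_comm]
    _ = ∑ p ∈ Finset.univ.filter (fun p : Fin k → Fin n => Function.Injective p),
          ∑ σ : Equiv.Perm (Fin k),
          ((Equiv.Perm.sign σ : ℤ) : R) * ∏ i, A (σ i) (p i) * B (p i) i := by
        refine (Finset.sum_subset (Finset.filter_subset _ _) fun f _ hni => ?_).symm
        apply cb_aux A B
        simpa using hni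
    _ = ∑ x : KSub n k × Equiv.Perm (Fin k),
          ∑ σ : Equiv.Perm (Fin k),
          ((Equiv.Perm.sign σ : ℤ) : R) *
            ∏ i, A (σ i) (kEmb x.1 (x.2 i)) * B (kEmb x.1 (x.2 i)) i := key.symm
    _ = ∑ S : KSub n k, ∑ τ : Equiv.Perm (Fin k), ∑ σ : Equiv.Perm (Fin k),
          ((Equiv.Perm.sign σ : ℤ) : R) *
            ∏ i, A (σ i) (kEmb S (τ i)) * B (kEmb S (τ i)) i :=
        Fintype.sum_prod_type _
    _ = ∑ S : KSub n k,
          det (A.submatrix id (kEmb S)) * det (B.submatrix (kEmb S) id) := by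
        apply Finset.sum_congr rfl
        intro S _
        rw [← det_mul, det_mul_expand]
        rfl

end CauchyBinet

section PartC

open Complex
open scoped ComplexOrder

variable {n k : ℕ}

lemma le_kEmb (S : KSub n k) (j : Fin k) : (j : ℕ) ≤ (kEmb S j : ℕ) := by
  suffices h : ∀ m : ℕ, ∀ j : Fin k, (j : ℕ) = m → m ≤ (kEmb S j : ℕ) by
    exact h (j : ℕ) j rfl
  intro m
  induction m with
  | zero => intro j _; exact Nat.zero_le _
  | succ m ih =>
    intro j hj
    have hm : m < k := by omega
    have hlt : (⟨m, hm⟩ : Fin k) < j := by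
      rw [Fin.lt_def, hj]; exact Nat.lt_succ_self m
    have h1 : kEmb S ⟨m, hm⟩ < kEmb S j := (S.1.orderEmbOfFin S.2).strictMono hlt
    have h2 := ih ⟨m, hm⟩ rfl
    rw [Fin.lt_def] at h1
    omega

lemma prod_kEmb {α : Type*} [CommMonoid α] (S : KSub n k) (g : Fin n → α) :
    ∏ i ∈ S.1, g i = ∏ j : Fin k, g (kEmb S j) := by
  rw [← image_eq_of_maps S (kEmb S) (kEmb_injective S) (kEmb_mem S)]
  rw [Finset.prod_image]
  intro x _ y _ h
  exact kEmb_injective S h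

/-- Cauchy–Binet for a quadratic form with a real diagonal in the middle. -/
lemma det_conjT_diag_mul (d : Fin n → ℝ) (M : Matrix (Fin n) (Fin k) ℂ) :
    Matrix.det (Mᴴ * Matrix.diagonal (fun i => ((d i : ℝ) : ℂ)) * M)
      = ((∑ S : KSub n k, (∏ i ∈ S.1, d i) *
          Complex.normSq (Matrix.det (M.submatrix (kEmb S) id)) : ℝ) : ℂ) := by
  rw [cauchy_binet]
  rw [Complex.ofReal_sum]
  apply Finset.sum_congr rfl
  intro S _
  have h1 : (Mᴴ * Matrix.diagonal (fun i => ((d i : ℝ) : ℂ))).submatrix id (kEmb S)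
      = Matrix.of (fun i j => ((d (kEmb S j) : ℝ) : ℂ) * (Mᴴ.submatrix id (kEmb S)) i j) := by
    ext i j
    simp [Matrix.mul_diagonal, Matrix.submatrix_apply, mul_comm]
  rw [h1, Matrix.det_mul_row]
  have h2 : Mᴴ.submatrix id (kEmb S) = (M.submatrix (kEmb S) id)ᴴ := by
    ext i j
    simp [Matrix.conjTranspose_apply, Matrix.submatrix_apply]
  rw [h2, Matrix.det_conjTranspose]
  have h3 : ∏ i : Fin k, ((d (kEmb S i) : ℝ) : ℂ) = ((∏ i ∈ S.1, d i : ℝ) : ℂ) := by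
    rw [prod_kEmb S d, Complex.ofReal_prod]
  rw [h3, Complex.ofReal_mul, Complex.normSq_eq_conj_mul_self, ← Complex.star_def, mul_assoc]

end PartC

section Spectral

variable (X : Matrix (Fin n) (Fin n) ℂ)

/-- Eigenvalues of `Xᴴ X`. -/
noncomputable def eigX : Fin n → ℝ :=
  (Matrix.isHermitian_conjTranspose_mul_self X).eigenvalues

lemma eigX_nonneg (i : Fin n) : 0 ≤ eigX X i :=
  (Matrix.posSemidef_conjTranspose_mul_self X).eigenvalues_nonneg i

/-- A permutation sorting the eigenvalues of `Xᴴ X` in decreasing order. -/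
noncomputable def sortX : Equiv.Perm (Fin n) :=
  (Fin.revPerm : Equiv.Perm (Fin n)).trans (Tuple.sort (eigX X))

/-- The decreasingly sorted eigenvalues of `Xᴴ X`. -/
noncomputable def dX : Fin n → ℝ := eigX X ∘ sortX X

lemma dX_antitone : Antitone (dX X) := by
  intro i j hij
  have := Tuple.monotone_sort (eigX X)
  have h2 : Fin.revPerm j ≤ Fin.revPerm i := by
    simp only [Fin.revPerm_apply]
    exact Fin.rev_le_rev.2 hij
  exact this h2

lemma dX_nonneg (i : Fin n) : 0 ≤ dX X i := eigX_nonneg X _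

/-- Sorted eigenvalues of `Xᴴ X`, as a function on `ℕ` (extended by zero). -/
noncomputable def aX : ℕ → ℝ := fun i => if h : i < n then dX X ⟨i, h⟩ else 0

lemma aX_nonneg (i : ℕ) : 0 ≤ aX X i := by
  unfold aX
  split
  · exact dX_nonneg X _
  · exact le_refl 0

lemma aX_antitone : ∀ i j : ℕ, i ≤ j → aX X j ≤ aX X i := by
  intro i j hij
  unfold aX
  by_cases hj : j < n
  · have hi : i < n := lt_of_le_of_lt hij hj
    rw [dif_pos hj, dif_pos hi]
    exact dX_antitone X (by exact hij)
  · rw [dif_neg hj]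
    split
    · exact dX_nonneg X _
    · exact le_refl 0

lemma prod_range_aX_nonneg (m : ℕ) : 0 ≤ ∏ i ∈ Finset.range m, aX X i :=
  Finset.prod_nonneg fun i _ => aX_nonneg X i

/-- Any `k`-subset product of eigenvalues is at most the product of the `k` largest. -/
lemma prodS_le (S : Finset (Fin n)) (hS : S.card = k) :
    ∏ i ∈ S, eigX X i ≤ ∏ i ∈ Finset.range k, aX X i := by
  have hkn : k ≤ n := by
    rw [← hS]
    simpa using Finset.card_le_univ S
  -- transfer to sorted coordinates
  set π := sortX X
  have himg : S = Finset.image π (Finset.image π.symm S) := by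
    rw [Finset.image_image]
    simp
  have h1 : ∏ i ∈ S, eigX X i = ∏ i ∈ Finset.image π.symm S, dX X i := by
    conv_lhs => rw [himg]
    rw [Finset.prod_image (fun x _ y _ h => π.injective h)]
    apply Finset.prod_congr rfl
    intro i _
    simp [dX]
    rfl
  rw [h1]
  have hcard : (Finset.image π.symm S).card = k := by
    rw [Finset.card_image_of_injective _ π.symm.injective, hS]
  set S' : KSub n k := ⟨Finset.image π.symm S, hcard⟩
  have h2 : ∏ i ∈ S'.1, dX X i = ∏ j : Fin k, dX X (kEmb S' j) := prod_kEmb S' (dX X)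
  have h3 : ∏ i ∈ Finset.range k, aX X i = ∏ j : Fin k, aX X (j : ℕ) :=
    (Fin.prod_univ_eq_prod_range _ _).symm
  rw [show (Finset.image π.symm S) = S'.1 from rfl, h2, h3]
  apply Finset.prod_le_prod
  · exact fun j _ => dX_nonneg X _
  · intro j _
    have hj : (j : ℕ) < n := lt_of_lt_of_le j.2 hkn
    have : aX X (j : ℕ) = dX X ⟨(j : ℕ), hj⟩ := dif_pos hj
    rw [this]
    apply dX_antitone X
    rw [Fin.le_def]
    exact le_kEmb S' j

end Spectral

section Compression

variable (X : Matrix (Fin n) (Fin n) ℂ)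

/-- The unitary diagonalizing `Xᴴ X`. -/
noncomputable def Umat : Matrix (Fin n) (Fin n) ℂ :=
  ((Matrix.isHermitian_conjTranspose_mul_self X).eigenvectorUnitary : Matrix (Fin n) (Fin n) ℂ)

lemma Umat_star_self : (Umat X)ᴴ * Umat X = 1 := by
  rw [← Matrix.star_eq_conjTranspose]
  exact (Matrix.mem_unitaryGroup_iff').mp
    ((Matrix.isHermitian_conjTranspose_mul_self X).eigenvectorUnitary).2

lemma Umat_self_star : Umat X * (Umat X)ᴴ = 1 := by
  rw [← Matrix.star_eq_conjTranspose]
  exact (Matrix.mem_unitaryGroup_iff).mp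
    ((Matrix.isHermitian_conjTranspose_mul_self X).eigenvectorUnitary).2

lemma spectralX : Xᴴ * X
    = Umat X * Matrix.diagonal (fun i => ((eigX X i : ℝ) : ℂ)) * (Umat X)ᴴ := by
  have h := (Matrix.isHermitian_conjTranspose_mul_self X).spectral_theorem
  rw [← Matrix.star_eq_conjTranspose]
  exact h

lemma UXXU : (Umat X)ᴴ * (Xᴴ * X) * Umat X
    = Matrix.diagonal (fun i => ((eigX X i : ℝ) : ℂ)) := by
  rw [spectralX]
  simp only [← Matrix.mul_assoc]
  rw [Umat_star_self, one_mul, Matrix.mul_assoc, Umat_star_self, mul_one]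

/-- Compressions by isometries are bounded by the product of the top `k` eigenvalues. -/
lemma compression_le (V : Matrix (Fin n) (Fin k) ℂ) (hV : Vᴴ * V = 1) :
    ∃ ρ : ℝ, Matrix.det (Vᴴ * (Xᴴ * X) * V) = (ρ : ℂ) ∧ 0 ≤ ρ ∧
      ρ ≤ ∏ i ∈ Finset.range k, aX X i := by
  set W := (Umat X)ᴴ * V with hWdef
  have hW : Vᴴ * (Xᴴ * X) * V
      = Wᴴ * Matrix.diagonal (fun i => ((eigX X i : ℝ) : ℂ)) * W := by
    rw [spectralX]
    simp only [hWdef, Matrix.conjTranspose_mul, Matrix.conjTranspose_conjTranspose,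
      Matrix.mul_assoc]
  have hWW : Wᴴ * W = 1 := by
    have h1 : Wᴴ * W = Vᴴ * (Umat X * (Umat X)ᴴ) * V := by
      simp only [hWdef, Matrix.conjTranspose_mul, Matrix.conjTranspose_conjTranspose,
        Matrix.mul_assoc]
    rw [h1, Umat_self_star, Matrix.mul_one] at *
    exact hV
  have hsum1 : (∑ S : KSub n k,
      Complex.normSq (Matrix.det (W.submatrix (kEmb S) id))) = 1 := by
    have h2 := det_conjT_diag_mul (fun _ : Fin n => (1 : ℝ)) W
    have h3 : Matrix.diagonal (fun i : Fin n => (((1:ℝ) : ℝ) : ℂ)) = 1 := by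
      simp
    rw [h3, Matrix.mul_one, hWW, Matrix.det_one] at h2
    have h4 : (∑ S : KSub n k, (∏ i ∈ S.1, (1:ℝ)) *
        Complex.normSq (Matrix.det (W.submatrix (kEmb S) id)))
        = ∑ S : KSub n k, Complex.normSq (Matrix.det (W.submatrix (kEmb S) id)) := by
      apply Finset.sum_congr rfl
      intro S _
      rw [Finset.prod_const_one, one_mul]
    rw [h4] at h2
    exact_mod_cast h2.symm
  rw [hW, det_conjT_diag_mul]
  refine ⟨_, rfl, ?_, ?_⟩
  · apply Finset.sum_nonneg
    intro S _
    exact mul_nonneg (Finset.prod_nonneg fun i _ => eigX_nonneg X i) (Complex.normSq_nonneg _)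
  · calc ∑ S : KSub n k, (∏ i ∈ S.1, eigX X i) *
          Complex.normSq (Matrix.det (W.submatrix (kEmb S) id))
        ≤ ∑ S : KSub n k, (∏ i ∈ Finset.range k, aX X i) *
          Complex.normSq (Matrix.det (W.submatrix (kEmb S) id)) := by
          apply Finset.sum_le_sum
          intro S _
          exact mul_le_mul_of_nonneg_right (prodS_le X S.1 S.2) (Complex.normSq_nonneg _)
      _ = (∏ i ∈ Finset.range k, aX X i) * ∑ S : KSub n k,
          Complex.normSq (Matrix.det (W.submatrix (kEmb S) id)) := by
          rw [Finset.mul_sum]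
      _ = ∏ i ∈ Finset.range k, aX X i := by rw [hsum1, mul_one]

/-- The product of the top `k` eigenvalues is attained by a compression. -/
lemma compression_attained (hk : k ≤ n) :
    ∃ V : Matrix (Fin n) (Fin k) ℂ, Vᴴ * V = 1 ∧
      Matrix.det (Vᴴ * (Xᴴ * X) * V) = ((∏ i ∈ Finset.range k, aX X i : ℝ) : ℂ) := by
  set em : Fin k → Fin n := fun j => sortX X (Fin.castLE hk j) with hemdef
  have hem : Function.Injective em := by
    intro i j h
    exact Fin.castLE_injective hk ((sortX X).injective h)
  refine ⟨(Umat X).submatrix id em, ?_, ?_⟩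
  · rw [Matrix.conjTranspose_submatrix,
      ← Matrix.submatrix_mul _ _ em id em Function.bijective_id, Umat_star_self,
      Matrix.submatrix_one em hem]
  · have h1 : (Umat X)ᴴ.submatrix em id * (Xᴴ * X)
        = ((Umat X)ᴴ * (Xᴴ * X)).submatrix em id := by
      rw [Matrix.submatrix_mul _ _ em id id Function.bijective_id, Matrix.submatrix_id_id]
    have h2 : ((Umat X)ᴴ * (Xᴴ * X)).submatrix em id * (Umat X).submatrix id em
        = ((Umat X)ᴴ * (Xᴴ * X) * Umat X).submatrix em em :=
      (Matrix.submatrix_mul _ _ em id em Function.bijective_id).symm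
    rw [Matrix.conjTranspose_submatrix, h1, h2, UXXU,
      Matrix.submatrix_diagonal _ em hem, Matrix.det_diagonal]
    have h3 : ∀ j : Fin k, eigX X (em j) = aX X (j : ℕ) := by
      intro j
      have hj : (j : ℕ) < n := lt_of_lt_of_le j.2 hk
      rw [aX, dif_pos hj]
      rfl
    calc ∏ j : Fin k, ((fun i => ((eigX X i : ℝ) : ℂ)) ∘ em) j
        = ∏ j : Fin k, ((aX X (j : ℕ) : ℝ) : ℂ) := by
          apply Finset.prod_congr rfl
          intro j _
          simp only [Function.comp_apply, h3 j]
      _ = ((∏ i ∈ Finset.range k, aX X i : ℝ) : ℂ) := by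
          rw [← Complex.ofReal_prod, Fin.prod_univ_eq_prod_range]

end Compression

section Step1

variable {f : Fin n → ℝ} (T : Matrix (Fin n) (Fin n) ℂ)

lemma conjT_diagPow (s : ℝ) : (diagPow f s)ᴴ = diagPow f s := by
  unfold diagPow
  rw [Matrix.diagonal_conjTranspose]
  have hfun : (star fun i => ((f i ^ s : ℝ) : ℂ)) = fun i => ((f i ^ s : ℝ) : ℂ) := by
    funext i
    simp only [Pi.star_apply, Complex.star_def]
    exact Complex.conj_ofReal _
  rw [hfun]

lemma diagPow_mul_self (hf : ∀ i, 0 < f i) (s : ℝ) :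
    diagPow f s * diagPow f s = Matrix.diagonal (fun i => ((f i ^ (2*s) : ℝ) : ℂ)) := by
  unfold diagPow
  rw [Matrix.diagonal_mul_diagonal]
  have hfun : (fun i => ((f i ^ s : ℝ) : ℂ) * ((f i ^ s : ℝ) : ℂ))
      = fun i => ((f i ^ (2*s) : ℝ) : ℂ) := by
    funext i
    rw [← Complex.ofReal_mul, ← Real.rpow_add (hf i), two_mul]
  rw [hfun]

lemma VPPV (hf : ∀ i, 0 < f i) (s : ℝ) {k : ℕ} (V : Matrix (Fin n) (Fin k) ℂ) :
    Vᴴ * ((diagPow f s * T)ᴴ * (diagPow f s * T)) * V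
      = (T*V)ᴴ * Matrix.diagonal (fun i => ((f i ^ (2*s) : ℝ) : ℂ)) * (T*V) := by
  rw [← diagPow_mul_self hf s]
  simp only [Matrix.conjTranspose_mul, conjT_diagPow, Matrix.mul_assoc]

lemma VTTV {k : ℕ} (V : Matrix (Fin n) (Fin k) ℂ) :
    Vᴴ * (Tᴴ * T) * V
      = (T*V)ᴴ * Matrix.diagonal (fun _ : Fin n => ((1 : ℝ) : ℂ)) * (T*V) := by
  have h1 : Matrix.diagonal (fun _ : Fin n => ((1:ℝ):ℂ)) = 1 := by simp
  rw [h1, Matrix.mul_one]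
  simp only [Matrix.conjTranspose_mul, Matrix.mul_assoc]

lemma step1 (hf : ∀ i, 0 < f i) {θ b : ℝ} (hθ0 : 0 < θ) (hθ1 : θ < 1) {k : ℕ} (hk : k ≤ n) :
    ∏ i ∈ Finset.range k, aX (diagPow f ((1-θ)*b) * T) i ≤
      (∏ i ∈ Finset.range k, aX (diagPow f b * T) i) ^ (1-θ) *
      (∏ i ∈ Finset.range k, aX T i) ^ θ := by
  set P := diagPow f ((1-θ)*b) * T with hPdef
  set Q := diagPow f b * T with hQdef
  obtain ⟨V, hV, hdet⟩ := compression_attained P hk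
  set M := T * V with hMdef
  -- expansion of the P-compression
  have hP : Matrix.det (Vᴴ * (Pᴴ * P) * V)
      = ((∑ S : KSub n k, (∏ i ∈ S.1, f i ^ (2*((1-θ)*b))) *
          Complex.normSq (Matrix.det (M.submatrix (kEmb S) id)) : ℝ) : ℂ) := by
    rw [hPdef, VPPV T hf ((1-θ)*b) V, det_conjT_diag_mul]
  have hPsum : (∏ i ∈ Finset.range k, aX P i)
      = ∑ S : KSub n k, (∏ i ∈ S.1, f i ^ (2*((1-θ)*b))) *
          Complex.normSq (Matrix.det (M.submatrix (kEmb S) id)) := by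
    have := hdet.symm.trans hP
    exact_mod_cast this
  -- expansion of the Q-compression
  obtain ⟨ρQ, hρQdet, hρQ0, hρQle⟩ := compression_le Q V hV
  have hQ : Matrix.det (Vᴴ * (Qᴴ * Q) * V)
      = ((∑ S : KSub n k, (∏ i ∈ S.1, f i ^ (2*b)) *
          Complex.normSq (Matrix.det (M.submatrix (kEmb S) id)) : ℝ) : ℂ) := by
    rw [hQdef, VPPV T hf b V, det_conjT_diag_mul]
  have hQsum : (∑ S : KSub n k, (∏ i ∈ S.1, f i ^ (2*b)) *
      Complex.normSq (Matrix.det (M.submatrix (kEmb S) id))) ≤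
      ∏ i ∈ Finset.range k, aX Q i := by
    have h := hρQdet.symm.trans hQ
    have : ρQ = ∑ S : KSub n k, (∏ i ∈ S.1, f i ^ (2*b)) *
        Complex.normSq (Matrix.det (M.submatrix (kEmb S) id)) := by exact_mod_cast h
    rw [← this]
    exact hρQle
  -- expansion of the T-compression
  obtain ⟨ρT, hρTdet, hρT0, hρTle⟩ := compression_le T V hV
  have hT : Matrix.det (Vᴴ * (Tᴴ * T) * V)
      = ((∑ S : KSub n k, (∏ i ∈ S.1, (1:ℝ)) *
          Complex.normSq (Matrix.det (M.submatrix (kEmb S) id)) : ℝ) : ℂ) := by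
    rw [VTTV T V, det_conjT_diag_mul]
  have hTsum : (∑ S : KSub n k,
      Complex.normSq (Matrix.det (M.submatrix (kEmb S) id))) ≤
      ∏ i ∈ Finset.range k, aX T i := by
    have h := hρTdet.symm.trans hT
    have h2 : ρT = ∑ S : KSub n k, (∏ i ∈ S.1, (1:ℝ)) *
        Complex.normSq (Matrix.det (M.submatrix (kEmb S) id)) := by exact_mod_cast h
    simp only [Finset.prod_const_one, one_mul] at h2
    rw [← h2]
    exact hρTle
  -- Hölder
  set x : KSub n k → ℝ := fun S => (∏ i ∈ S.1, f i ^ (2*b)) *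
      Complex.normSq (Matrix.det (M.submatrix (kEmb S) id)) with hxdef
  set y : KSub n k → ℝ := fun S =>
      Complex.normSq (Matrix.det (M.submatrix (kEmb S) id)) with hydef
  have hterm : ∀ S : KSub n k, (∏ i ∈ S.1, f i ^ (2*((1-θ)*b))) *
      Complex.normSq (Matrix.det (M.submatrix (kEmb S) id))
      = x S ^ (1-θ) * y S ^ θ := by
    intro S
    have hw : ∀ i : Fin n, f i ^ (2*((1-θ)*b)) = (f i ^ (2*b)) ^ (1-θ) := by
      intro i
      rw [← Real.rpow_mul (hf i).le]
      ring_nf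
    have hprod : (∏ i ∈ S.1, f i ^ (2*((1-θ)*b)))
        = (∏ i ∈ S.1, f i ^ (2*b)) ^ (1-θ) := by
      rw [Finset.prod_congr rfl (fun i _ => hw i)]
      exact Real.finset_prod_rpow _ _ (fun i _ => (Real.rpow_nonneg (hf i).le _)) _
    rw [hprod, hxdef, hydef]
    simp only []
    rw [Real.mul_rpow (Finset.prod_nonneg fun i _ => Real.rpow_nonneg (hf i).le _)
      (Complex.normSq_nonneg _)]
    rw [mul_assoc]
    congr 1
    rw [← Real.rpow_add' (Complex.normSq_nonneg _) (by norm_num)]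
    norm_num
  have hx0 : ∀ S, 0 ≤ x S := fun S => mul_nonneg
    (Finset.prod_nonneg fun i _ => Real.rpow_nonneg (hf i).le _) (Complex.normSq_nonneg _)
  have hy0 : ∀ S, 0 ≤ y S := fun S => Complex.normSq_nonneg _
  calc ∏ i ∈ Finset.range k, aX P i
      = ∑ S : KSub n k, x S ^ (1-θ) * y S ^ θ := by
        rw [hPsum]
        exact Finset.sum_congr rfl fun S _ => hterm S
    _ ≤ (∑ S, x S) ^ (1-θ) * (∑ S, y S) ^ θ :=
        sum_rpow_mul_rpow_le Finset.univ x y hx0 hy0 (by linarith) hθ0 (by ring)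
    _ ≤ (∏ i ∈ Finset.range k, aX Q i) ^ (1-θ) *
        (∏ i ∈ Finset.range k, aX T i) ^ θ := by
        apply mul_le_mul
        · exact Real.rpow_le_rpow (Finset.sum_nonneg fun S _ => hx0 S) hQsum (by linarith)
        · exact Real.rpow_le_rpow (Finset.sum_nonneg fun S _ => hy0 S) hTsum hθ0.le
        · exact Real.rpow_nonneg (Finset.sum_nonneg fun S _ => hy0 S) _
        · exact Real.rpow_nonneg (prod_range_aX_nonneg Q k) _

end Step1


section Transfer

variable {n : ℕ}

lemma sum_range_aX_rpow (X : Matrix (Fin n) (Fin n) ℂ) (t : ℝ) :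
    ∑ i ∈ Finset.range n, (aX X i) ^ t = ∑ i : Fin n, (eigX X i) ^ t := by
  rw [← Fin.sum_univ_eq_sum_range (fun i => (aX X i) ^ t) n]
  have h1 : ∀ j : Fin n, aX X (j : ℕ) = dX X j := by
    intro j
    unfold aX
    rw [dif_pos j.2]
  calc ∑ j : Fin n, aX X (j : ℕ) ^ t
      = ∑ j : Fin n, dX X j ^ t := by
        exact Finset.sum_congr rfl fun j _ => by rw [h1 j]
    _ = ∑ j : Fin n, eigX X j ^ t :=
        Equiv.sum_comp (sortX X) (fun i => eigX X i ^ t)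

lemma schattenNorm_eq (t : ℝ) (y : Matrix (Fin n) (Fin n) ℂ) :
    schattenNorm t y = (∑ i, (eigX y i) ^ (t/2)) ^ (1/t) := by
  unfold schattenNorm
  congr 1
  apply Finset.sum_congr rfl
  intro i _
  show Real.sqrt (eigX y i) ^ t = eigX y i ^ (t/2)
  rw [Real.sqrt_eq_rpow, ← Real.rpow_mul (eigX_nonneg y i),
    show (1/(2:ℝ)) * t = t/2 from by ring]

end Transfer

/-- Lemma 1.5 specialized to matrices (column-only extrapolation data): let
`0 < p < q ≤ 2`, `1/r = 1/p - 1/2`, `1/q = (1-θ)/p + θ/2`, and let `f` be a positive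
diagonal density. Then
`‖f^{(1-θ)/r} T‖_{S_q} ≤ ‖f^{1/r} T‖_{S_p}^{1-θ} ‖T‖_{S_2}^θ`. -/
theorem holder_interpolation_diagonal
    (p q r θ : ℝ) (hp0 : 0 < p) (hpq : p < q) (hq2 : q ≤ 2)
    (hr : 1 / r = 1 / p - 1 / 2) (hθ : 1 / q = (1 - θ) / p + θ / 2)
    (n : ℕ) (f : Fin n → ℝ) (hf : ∀ i, 0 < f i)
    (T : Matrix (Fin n) (Fin n) ℂ) :
    schattenNorm q (diagPow f ((1 - θ) / r) * T) ≤
      schattenNorm p (diagPow f (1 / r) * T) ^ (1 - θ) * schattenNorm 2 T ^ θ := by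
  have hq0 : 0 < q := hp0.trans hpq
  have hp2 : p < 2 := lt_of_lt_of_le hpq hq2
  have hpq' : 1/q < 1/p := one_div_lt_one_div_of_lt hp0 hpq
  have hp2' : (1:ℝ)/2 < 1/p := one_div_lt_one_div_of_lt hp0 hp2
  have hq2' : (1:ℝ)/2 ≤ 1/q := one_div_le_one_div_of_le hq0 hq2
  have hθval : θ * (1/p - 1/2) = 1/p - 1/q := by linear_combination hθ
  have hθ0 : 0 < θ := by nlinarith
  by_cases hq2e : q = 2
  · -- the case `q = 2`, `θ = 1`
    have hθ1 : θ = 1 := by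
      rw [hq2e] at hθval
      have hc : (0:ℝ) < 1/p - 1/2 := by linarith
      nlinarith
    have h0 : (1 - θ)/r = 0 := by rw [hθ1]; norm_num
    have hD1 : diagPow f 0 = 1 := by
      unfold diagPow
      have : (fun i => ((f i ^ (0:ℝ) : ℝ) : ℂ)) = fun _ => (1:ℂ) := by
        funext i; rw [Real.rpow_zero]; norm_num
      rw [this]
      exact Matrix.diagonal_one
    rw [h0, hD1, one_mul, hθ1, hq2e, sub_self, Real.rpow_zero, one_mul, Real.rpow_one]
  · -- the main case `q < 2`, `0 < θ < 1`
    have hq2lt : q < 2 := lt_of_le_of_ne hq2 hq2e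
    have hq2'' : (1:ℝ)/2 < 1/q := one_div_lt_one_div_of_lt hq0 hq2lt
    have hθ1 : θ < 1 := by nlinarith
    have hb : (1 - θ)/r = (1-θ) * (1/r) := by ring
    rw [hb]
    set P := diagPow f ((1-θ) * (1/r)) * T with hPdef
    set Q := diagPow f (1/r) * T with hQdef
    -- Step 3: majorization
    have hmaj : ∑ i ∈ Finset.range n, (aX P i)^(q/2)
        ≤ ∑ i ∈ Finset.range n, ((aX Q i)^(1-θ) * (aX T i)^θ)^(q/2) := by
      apply sum_rpow_le_sum_rpow_of_prodles n _ _
        (fun i _ => aX_nonneg P i)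
        (fun i _ => mul_nonneg (Real.rpow_nonneg (aX_nonneg Q i) _)
          (Real.rpow_nonneg (aX_nonneg T i) _))
        ?_ ?_ (half_pos hq0)
      · intro i j hij hj
        exact aX_antitone P i j hij
      · intro k hk
        rw [Finset.prod_mul_distrib,
          Real.finset_prod_rpow _ _ (fun i _ => aX_nonneg Q i) _,
          Real.finset_prod_rpow _ _ (fun i _ => aX_nonneg T i) _]
        exact step1 T hf hθ0 hθ1 hk
    -- Step 4: Hölder
    have hα : (0:ℝ) < (1-θ)*q/p := div_pos (mul_pos (by linarith) hq0) hp0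
    have hβ : (0:ℝ) < θ*q/2 := by positivity
    have hqinv : q * (1/q) = 1 := mul_one_div_cancel hq0.ne'
    have hαβ : (1-θ)*q/p + θ*q/2 = 1 := by linear_combination (-q) * hθ + hqinv
    have hhold : ∑ i ∈ Finset.range n, ((aX Q i)^(1-θ) * (aX T i)^θ)^(q/2)
        ≤ (∑ i ∈ Finset.range n, (aX Q i)^(p/2))^((1-θ)*q/p)
          * (∑ i ∈ Finset.range n, (aX T i)^(1:ℝ))^(θ*q/2) := by
      have hterm : ∀ i, ((aX Q i)^(1-θ) * (aX T i)^θ)^(q/2)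
          = ((aX Q i)^(p/2))^((1-θ)*q/p) * ((aX T i)^(1:ℝ))^(θ*q/2) := by
        intro i
        rw [Real.mul_rpow (Real.rpow_nonneg (aX_nonneg Q i) _)
          (Real.rpow_nonneg (aX_nonneg T i) _),
          ← Real.rpow_mul (aX_nonneg Q i), ← Real.rpow_mul (aX_nonneg T i),
          ← Real.rpow_mul (aX_nonneg Q i), ← Real.rpow_mul (aX_nonneg T i)]
        congr 1
        · congr 1
          field_simp [hp0.ne', hq0.ne']
        · congr 1
          ring
      rw [Finset.sum_congr rfl (fun i _ => hterm i)]
      exact sum_rpow_mul_rpow_le (Finset.range n) _ _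
        (fun i => Real.rpow_nonneg (aX_nonneg Q i) _)
        (fun i => Real.rpow_nonneg (aX_nonneg T i) _) hα hβ hαβ
    have hchain := le_trans hmaj hhold
    rw [sum_range_aX_rpow P (q/2), sum_range_aX_rpow Q (p/2), sum_range_aX_rpow T 1] at hchain
    -- assemble
    rw [schattenNorm_eq q P, schattenNorm_eq p Q, schattenNorm_eq 2 T,
      show ((2:ℝ)/2) = (1:ℝ) from by norm_num]
    have hB0 : 0 ≤ ∑ i : Fin n, (eigX Q i)^(p/2) :=
      Finset.sum_nonneg fun i _ => Real.rpow_nonneg (eigX_nonneg Q i) _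
    have hC0 : 0 ≤ ∑ i : Fin n, (eigX T i)^(1:ℝ) :=
      Finset.sum_nonneg fun i _ => Real.rpow_nonneg (eigX_nonneg T i) _
    have hA0 : 0 ≤ ∑ i : Fin n, (eigX P i)^(q/2) :=
      Finset.sum_nonneg fun i _ => Real.rpow_nonneg (eigX_nonneg P i) _
    calc (∑ i : Fin n, (eigX P i)^(q/2))^(1/q)
        ≤ ((∑ i : Fin n, (eigX Q i)^(p/2))^((1-θ)*q/p)
            * (∑ i : Fin n, (eigX T i)^(1:ℝ))^(θ*q/2))^(1/q) :=
          Real.rpow_le_rpow hA0 hchain (one_div_nonneg.2 hq0.le)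
      _ = ((∑ i : Fin n, (eigX Q i)^(p/2))^(1/p))^(1-θ)
            * ((∑ i : Fin n, (eigX T i)^(1:ℝ))^((1:ℝ)/2))^θ := by
          rw [Real.mul_rpow (Real.rpow_nonneg hB0 _) (Real.rpow_nonneg hC0 _),
            ← Real.rpow_mul hB0, ← Real.rpow_mul hC0,
            ← Real.rpow_mul hB0, ← Real.rpow_mul hC0]
          congr 1
          · congr 1
            field_simp [hp0.ne', hq0.ne']
          · congr 1
            field_simp [hq0.ne']
end
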